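/- arXiv:2508.01703 — 5 statements merged into one kernel-verified Lean document; each statement's English description precedes it below -/
import Mathlib

section
/- Assume μ is the unique Gibbs measure for a strongly uniformly absolutely convergent (SUAC) interaction Ψ on X. If μ satisfies the log-Sobolev inequality with constant D > 0, then μ satisfies the Gaussian Concentration Bound with constant D·(e^{2‖Ψ‖} + 1)/2. -/
open MeasureTheory Real

noncomputable section

/-- The configuration space `X = {-1,+1}^ℤ`, with spins encoded by booleans. -/
abbrev Config : Type := ℤ → Bool

/-- The real value of a spin: `true ↦ +1`, `false ↦ -1`. -/
def spin (b : Bool) : ℝ := if b then 1 else -1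

/-- Spin flipAt at site `i`. -/
def flipAt (i : ℤ) (ω : Config) : Config := fun j => if j = i then !(ω j) else ω j

/-- A function is local if it depends on finitely many coordinates. -/
def IsLocal (F : Config → ℝ) : Prop :=
  ∃ S : Finset ℤ, ∀ ω η : Config, (∀ i ∈ S, ω i = η i) → F ω = F η

/-- The oscillation `δ_k F` at site `k`. -/
def osc (F : Config → ℝ) (k : ℤ) : ℝ :=
  sSup {d : ℝ | ∃ ξ η : Config, (∀ j : ℤ, j ≠ k → ξ j = η j) ∧ d = F ξ - F η}

/-- The total squared oscillation `‖δ(F)‖₂²`. -/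
def oscSq (F : Config → ℝ) : ℝ := ∑' k : ℤ, (osc F k) ^ 2

/-- The Gaussian Concentration Bound with constant `D`. -/
def GCB (μ : Measure Config) (D : ℝ) : Prop :=
  ∀ F : Config → ℝ, IsLocal F → Continuous F →
    (∫ ω, exp (F ω - ∫ η, F η ∂μ) ∂μ) ≤ exp (D * oscSq F)

/-- The entropy functional `Ent_μ(g)`. -/
def entropy (μ : Measure Config) (g : Config → ℝ) : ℝ :=
  (∫ ω, g ω * log (g ω) ∂μ) - (∫ ω, g ω ∂μ) * log (∫ ω, g ω ∂μ)

/-- The log-Sobolev inequality with constant `D`. -/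
def SatisfiesLSI (μ : Measure Config) (D : ℝ) : Prop :=
  ∀ f : Config → ℝ, IsLocal f → Continuous f →
    entropy μ (fun ω => (f ω) ^ 2) ≤ 2 * D * ∫ ω, ∑' i : ℤ, (f ω - f (flipAt i ω)) ^ 2 ∂μ

/-- The Hamiltonian `H^{βK}_Λ(ω) = -β ∑_{{i,j}∩Λ≠∅, i≠j} K(i,j) ω_i ω_j`,
where the sum runs over ordered pairs with `i < j`. -/
def hamiltonian (K : ℤ → ℤ → ℝ) (β : ℝ) (Λ : Finset ℤ) (ω : Config) : ℝ :=
  -β * ∑' p : ℤ × ℤ,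
      (if p.1 < p.2 ∧ (p.1 ∈ Λ ∨ p.2 ∈ Λ) then K p.1 p.2 * spin (ω p.1) * spin (ω p.2) else 0)

/-- The configuration equal to `a` in `Λ` and to `ω` off `Λ`. -/
def concat (Λ : Finset ℤ) (a : Λ → Bool) (ω : Config) : Config :=
  fun j => if h : j ∈ Λ then a ⟨j, h⟩ else ω j

/-- The Gibbs kernel `γ^{βK}_Λ(a | ω)`. -/
def gibbsKernel (K : ℤ → ℤ → ℝ) (β : ℝ) (Λ : Finset ℤ) (a : Λ → Bool) (ω : Config) : ℝ :=
  exp (-(hamiltonian K β Λ (concat Λ a ω))) /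
    ∑ b : Λ → Bool, exp (-(hamiltonian K β Λ (concat Λ b ω)))

/-- The σ-algebra `F_{Λᶜ}` generated by the coordinates outside `Λ`. -/
def outsideAlgebra (Λ : Finset ℤ) : MeasurableSpace Config :=
  MeasurableSpace.comap (fun (ω : Config) (j : {j : ℤ // j ∉ Λ}) => ω j.1) inferInstance

/-- The cylinder event `{σ_Λ = a}`. -/
def cylinderEvent (Λ : Finset ℤ) (a : Λ → Bool) : Set Config :=
  {ω | ∀ i : Λ, ω i.1 = a i}

/-- `μ` is a Gibbs measure for the pair coupling `K` at inverse temperature `β`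
(the DLR equations). -/
def IsGibbs (K : ℤ → ℤ → ℝ) (β : ℝ) (μ : Measure Config) : Prop :=
  IsProbabilityMeasure μ ∧
  ∀ (Λ : Finset ℤ) (a : Λ → Bool) (B : Set Config),
    MeasurableSet[outsideAlgebra Λ] B →
    (μ (cylinderEvent Λ a ∩ B)).toReal = ∫ ω in B, gibbsKernel K β Λ a ω ∂μ

/-- The Dyson pair couplings `K(i,j) = J(|i-j|)` for `i ≠ j`. -/
def dysonK (J : ℕ → ℝ) : ℤ → ℤ → ℝ := fun i j => if i = j then 0 else J (i - j).natAbs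

/-- The critical inverse temperature `β_c(K)`. -/
def betaC (K : ℤ → ℤ → ℝ) : ℝ :=
  sSup {β : ℝ | 0 ≤ β ∧ ∃! μ : Measure Config, IsGibbs K β μ}

/-- The susceptibility `χ(μ) = ∑_{i∈ℤ} ∫ ω₀ ω_i dμ`. -/
def suscept (μ : Measure Config) : ℝ := ∑' i : ℤ, ∫ ω, spin (ω 0) * spin (ω i) ∂μ

/-- `g` depends only on the coordinates in `V`. -/
def dependsOn (V : Finset ℤ) (g : Config → ℝ) : Prop :=
  ∀ ω η : Config, (∀ i ∈ V, ω i = η i) → g ω = g η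

/-- The sup norm `‖g‖_∞`. -/
def supNorm (g : Config → ℝ) : ℝ := ⨆ ω : Config, |g ω|

/-- `∑_{V ∋ i} ‖Ψ_V‖_∞`. -/
def siteNorm (Ψ : Finset ℤ → Config → ℝ) (i : ℤ) : ℝ :=
  ∑' V : Finset ℤ, if i ∈ V then supNorm (Ψ V) else 0

/-- The SUAC norm `‖Ψ‖ = sup_i ∑_{V ∋ i} ‖Ψ_V‖_∞`. -/
def normInt (Ψ : Finset ℤ → Config → ℝ) : ℝ := ⨆ i : ℤ, siteNorm Ψ i

/-- `Ψ` is a strongly uniformly absolutely convergent interaction. -/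
def IsSUAC (Ψ : Finset ℤ → Config → ℝ) : Prop :=
  (∀ V, Continuous (Ψ V)) ∧ (∀ V, dependsOn V (Ψ V)) ∧ Ψ ∅ = 0 ∧
  (∀ i : ℤ, Summable fun V : Finset ℤ => if i ∈ V then supNorm (Ψ V) else 0) ∧
  BddAbove (Set.range (siteNorm Ψ))

/-- The Hamiltonian `H_Λ = ∑_{V∩Λ≠∅} Ψ_V`. -/
def hamInt (Ψ : Finset ℤ → Config → ℝ) (Λ : Finset ℤ) (ω : Config) : ℝ :=
  ∑' V : Finset ℤ, if (V ∩ Λ).Nonempty then Ψ V ω else 0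

/-- The Gibbs kernel associated with the interaction `Ψ`. -/
def gibbsKernelInt (Ψ : Finset ℤ → Config → ℝ) (Λ : Finset ℤ) (a : Λ → Bool) (ω : Config) : ℝ :=
  exp (-(hamInt Ψ Λ (concat Λ a ω))) / ∑ b : Λ → Bool, exp (-(hamInt Ψ Λ (concat Λ b ω)))

/-- `μ` is a Gibbs measure for the interaction `Ψ` (the DLR equations). -/
def IsGibbsInt (Ψ : Finset ℤ → Config → ℝ) (μ : Measure Config) : Prop :=
  IsProbabilityMeasure μ ∧
  ∀ (Λ : Finset ℤ) (a : Λ → Bool) (B : Set Config),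
    MeasurableSet[outsideAlgebra Λ] B →
    (μ (cylinderEvent Λ a ∩ B)).toReal = ∫ ω in B, gibbsKernelInt Ψ Λ a ω ∂μ

namespace StatementSixAux

/-! ### Basic boundedness facts -/

lemma exists_bound (g : Config → ℝ) (hg : Continuous g) : ∃ M : ℝ, ∀ ω, |g ω| ≤ M := by
  obtain ⟨M, hM⟩ := (isCompact_univ.image (continuous_abs.comp hg)).bddAbove
  exact ⟨M, fun ω => hM ⟨ω, trivial, rfl⟩⟩

lemma abs_le_supNorm (g : Config → ℝ) (hg : Continuous g) (ω : Config) : |g ω| ≤ supNorm g := by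
  obtain ⟨M, hM⟩ := exists_bound g hg
  exact le_ciSup ⟨M, by rintro x ⟨ω', rfl⟩; exact hM ω'⟩ ω

lemma integrable_of_continuous (μ : Measure Config) [IsProbabilityMeasure μ]
    (g : Config → ℝ) (hg : Continuous g) : Integrable g μ :=
  MeasureTheory.integrableOn_univ.mp
    (ContinuousOn.integrableOn_compact isCompact_univ hg.continuousOn)

/-! ### Cylinder events -/

lemma measurable_cyl (Λ : Finset ℤ) (a : Λ → Bool) : MeasurableSet (cylinderEvent Λ a) := by
  have h : cylinderEvent Λ a = ⋂ i : Λ, {ω : Config | ω i.1 = a i} := by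
    ext ω; simp [cylinderEvent, Set.mem_iInter]
  rw [h]
  refine MeasurableSet.iInter fun i => ?_
  have : {ω : Config | ω i.1 = a i} = (fun ω : Config => ω i.1) ⁻¹' {a i} := by
    ext ω; simp
  rw [this]
  exact measurable_pi_apply (i.1 : ℤ) (MeasurableSet.singleton (a i))

/-- The reference configuration associated with `a` on `S`. -/
def cfg (S : Finset ℤ) (a : S → Bool) : Config := concat S a (fun _ => true)

lemma cfg_spec (S : Finset ℤ) (a : S → Bool) (i : ℤ) (hi : i ∈ S) : cfg S a i = a ⟨i, hi⟩ := by
  simp [cfg, concat, hi]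

lemma sum_indicator_eq (S : Finset ℤ) (g : Config → ℝ) (hg : dependsOn S g) (ω : Config) :
    g ω = ∑ a : S → Bool,
      Set.indicator (cylinderEvent S a) (fun _ => g (cfg S a)) ω := by
  classical
  rw [Finset.sum_eq_single (fun i : S => ω i.1)]
  · rw [Set.indicator_of_mem (by intro i; rfl)]
    exact hg _ _ (fun i hi => by rw [cfg_spec S _ i hi])
  · intro b _ hb
    refine Set.indicator_of_notMem (fun hmem => hb ?_) _
    funext i
    exact (hmem i).symm
  · intro h; exact absurd (Finset.mem_univ _) h

lemma integral_local (μ : Measure Config) [IsProbabilityMeasure μ]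
    (S : Finset ℤ) (g : Config → ℝ) (hg : dependsOn S g) :
    ∫ ω, g ω ∂μ = ∑ a : S → Bool, (μ (cylinderEvent S a)).toReal * g (cfg S a) := by
  classical
  have h : ∀ ω, g ω = ∑ a : S → Bool,
      Set.indicator (cylinderEvent S a) (fun _ => g (cfg S a)) ω := sum_indicator_eq S g hg
  rw [show (fun ω => g ω) = fun ω => ∑ a : S → Bool,
      Set.indicator (cylinderEvent S a) (fun _ => g (cfg S a)) ω from funext h]
  rw [integral_finset_sum _ (fun a _ => (integrable_const _).indicator (measurable_cyl S a))]
  refine Finset.sum_congr rfl fun a _ => ?_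
  rw [integral_indicator_const _ (measurable_cyl S a)]
  simp [mul_comm, measureReal_def]

lemma sum_p_eq_one (μ : Measure Config) [IsProbabilityMeasure μ] (S : Finset ℤ) :
    ∑ a : S → Bool, (μ (cylinderEvent S a)).toReal = 1 := by
  have := integral_local μ S (fun _ => (1:ℝ)) (fun _ _ _ => rfl)
  simpa using this.symm

end StatementSixAux
namespace StatementSixAux

/-! ### Hamiltonian of a single site -/

lemma inter_singleton_nonempty (V : Finset ℤ) (i : ℤ) :
    (V ∩ ({i} : Finset ℤ)).Nonempty ↔ i ∈ V := by
  constructor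
  · rintro ⟨x, hx⟩
    rw [Finset.mem_inter, Finset.mem_singleton] at hx
    rcases hx with ⟨h1, rfl⟩; exact h1
  · intro h; exact ⟨i, Finset.mem_inter.2 ⟨h, Finset.mem_singleton_self i⟩⟩

lemma ham_term_bound (Ψ : Finset ℤ → Config → ℝ) (hΨ : IsSUAC Ψ) (i : ℤ) (V : Finset ℤ)
    (ω : Config) :
    |if (V ∩ ({i} : Finset ℤ)).Nonempty then Ψ V ω else 0| ≤
      (if i ∈ V then supNorm (Ψ V) else 0) := by
  by_cases h : i ∈ V
  · rw [if_pos ((inter_singleton_nonempty V i).2 h), if_pos h]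
    exact abs_le_supNorm _ (hΨ.1 V) ω
  · rw [if_neg (fun hne => h ((inter_singleton_nonempty V i).1 hne)), if_neg h]
    simp

lemma summable_ham (Ψ : Finset ℤ → Config → ℝ) (hΨ : IsSUAC Ψ) (i : ℤ) (ω : Config) :
    Summable fun V : Finset ℤ => if (V ∩ ({i} : Finset ℤ)).Nonempty then Ψ V ω else 0 := by
  refine Summable.of_abs (Summable.of_nonneg_of_le (fun V => abs_nonneg _)
    (fun V => ham_term_bound Ψ hΨ i V ω) (hΨ.2.2.2.1 i))

lemma abs_hamInt_le (Ψ : Finset ℤ → Config → ℝ) (hΨ : IsSUAC Ψ) (i : ℤ) (ω : Config) :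
    |hamInt Ψ ({i} : Finset ℤ) ω| ≤ normInt Ψ := by
  have hsum := summable_ham Ψ hΨ i ω
  have habs : Summable fun V : Finset ℤ =>
      ‖if (V ∩ ({i} : Finset ℤ)).Nonempty then Ψ V ω else 0‖ := by
    simpa using hsum.abs
  have h0 := norm_tsum_le_tsum_norm habs
  have h2 : (∑' V : Finset ℤ, ‖if (V ∩ ({i} : Finset ℤ)).Nonempty then Ψ V ω else 0‖)
      ≤ ∑' V : Finset ℤ, (if i ∈ V then supNorm (Ψ V) else 0) := by
    refine Summable.tsum_le_tsum (fun V => ?_) habs (hΨ.2.2.2.1 i)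
    simpa using ham_term_bound Ψ hΨ i V ω
  have h1 : |hamInt Ψ ({i} : Finset ℤ) ω| ≤ siteNorm Ψ i := by
    unfold hamInt siteNorm
    calc ‖∑' V : Finset ℤ, if (V ∩ ({i} : Finset ℤ)).Nonempty then Ψ V ω else 0‖
        ≤ _ := h0
      _ ≤ _ := h2
  exact h1.trans (le_ciSup hΨ.2.2.2.2 i)

lemma continuous_concat (Λ : Finset ℤ) (a : Λ → Bool) : Continuous (concat Λ a) := by
  refine continuous_pi fun j => ?_
  by_cases h : j ∈ Λ
  · simpa [concat, h] using continuous_const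
  · simpa [concat, h] using continuous_apply j

lemma continuous_hamInt_single (Ψ : Finset ℤ → Config → ℝ) (hΨ : IsSUAC Ψ) (i : ℤ) :
    Continuous (hamInt Ψ ({i} : Finset ℤ)) := by
  refine continuous_tsum (f := fun (V : Finset ℤ) (ω : Config) =>
      if (V ∩ ({i} : Finset ℤ)).Nonempty then Ψ V ω else 0)
    (fun V => ?_) (hΨ.2.2.2.1 i) (fun V ω => ?_)
  · by_cases h : (V ∩ ({i} : Finset ℤ)).Nonempty
    · simpa [h] using hΨ.1 V
    · simpa [h] using continuous_const
  · simpa using ham_term_bound Ψ hΨ i V ω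

lemma continuous_kernel_single (Ψ : Finset ℤ → Config → ℝ) (hΨ : IsSUAC Ψ) (i : ℤ)
    (a : ({i} : Finset ℤ) → Bool) : Continuous (gibbsKernelInt Ψ ({i} : Finset ℤ) a) := by
  unfold gibbsKernelInt
  have hc : ∀ b : ({i} : Finset ℤ) → Bool,
      Continuous fun ω => exp (-(hamInt Ψ ({i} : Finset ℤ) (concat ({i} : Finset ℤ) b ω))) :=
    fun b => (((continuous_hamInt_single Ψ hΨ i).comp (continuous_concat _ b)).neg).rexp
  refine Continuous.div (hc a) (continuous_finset_sum _ fun b _ => hc b) fun ω => ?_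
  exact ne_of_gt (Finset.sum_pos (fun b _ => exp_pos _) ⟨fun _ => true, Finset.mem_univ _⟩)

lemma kden_pos (Ψ : Finset ℤ → Config → ℝ) (Λ : Finset ℤ) (ω : Config) :
    0 < ∑ b : Λ → Bool, exp (-(hamInt Ψ Λ (concat Λ b ω))) :=
  Finset.sum_pos (fun b _ => exp_pos _) ⟨fun _ => true, Finset.mem_univ _⟩

end StatementSixAux
namespace StatementSixAux

lemma kernel_ratio (Ψ : Finset ℤ → Config → ℝ) (hΨ : IsSUAC Ψ) (i : ℤ)
    (a b : ({i} : Finset ℤ) → Bool) (ω : Config) :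
    gibbsKernelInt Ψ ({i} : Finset ℤ) a ω ≤
      exp (2 * normInt Ψ) * gibbsKernelInt Ψ ({i} : Finset ℤ) b ω := by
  have ha := abs_le.1 (abs_hamInt_le Ψ hΨ i (concat ({i} : Finset ℤ) a ω))
  have hb := abs_le.1 (abs_hamInt_le Ψ hΨ i (concat ({i} : Finset ℤ) b ω))
  have hnum : exp (-(hamInt Ψ ({i} : Finset ℤ) (concat ({i} : Finset ℤ) a ω))) ≤
      exp (2 * normInt Ψ) * exp (-(hamInt Ψ ({i} : Finset ℤ) (concat ({i} : Finset ℤ) b ω))) := by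
    rw [← exp_add]
    apply exp_le_exp.2
    linarith [ha.2, hb.1]
  unfold gibbsKernelInt
  rw [← mul_div_assoc]
  exact (div_le_div_iff_of_pos_right (kden_pos Ψ _ ω)).2 hnum

end StatementSixAux
namespace StatementSixAux

/-- Flip the value of `a` at site `i`. -/
def flipA (S : Finset ℤ) (i : ℤ) (a : S → Bool) : S → Bool :=
  fun j => if (j : ℤ) = i then !(a j) else a j

lemma flipA_invol (S : Finset ℤ) (i : ℤ) (a : S → Bool) : flipA S i (flipA S i a) = a := by
  funext j
  by_cases h : (j : ℤ) = i <;> simp [flipA, h]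

lemma flipA_bijective (S : Finset ℤ) (i : ℤ) : Function.Bijective (flipA S i) :=
  Function.Involutive.bijective (flipA_invol S i)

lemma p_flip_le (Ψ : Finset ℤ → Config → ℝ) (hΨ : IsSUAC Ψ) (μ : Measure Config)
    (hμ : IsGibbsInt Ψ μ) (S : Finset ℤ) (i : ℤ) (hi : i ∈ S) (a : S → Bool) :
    (μ (cylinderEvent S (flipA S i a))).toReal ≤
      exp (2 * normInt Ψ) * (μ (cylinderEvent S a)).toReal := by
  classical
  haveI : IsProbabilityMeasure μ := hμ.1
  set B : Set Config := {ω : Config | ∀ j : S, (j : ℤ) ≠ i → ω j = a j} with hBdef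
  have hB : MeasurableSet[outsideAlgebra ({i} : Finset ℤ)] B := by
    refine ⟨⋂ j : S, ⋂ h : (j : ℤ) ≠ i,
      {x : {k : ℤ // k ∉ ({i} : Finset ℤ)} → Bool |
        x ⟨(j : ℤ), by simpa using h⟩ = a j}, ?_, ?_⟩
    · refine MeasurableSet.iInter fun j => MeasurableSet.iInter fun h => ?_
      have : {x : {k : ℤ // k ∉ ({i} : Finset ℤ)} → Bool |
          x ⟨(j : ℤ), by simpa using h⟩ = a j} =
          (fun x : {k : ℤ // k ∉ ({i} : Finset ℤ)} → Bool =>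
            x ⟨(j : ℤ), by simpa using h⟩) ⁻¹' {a j} := by
        ext x; simp
      rw [this]
      exact measurable_pi_apply _ (MeasurableSet.singleton _)
    · ext ω
      simp only [Set.mem_preimage, Set.mem_iInter, Set.mem_setOf_eq, hBdef]
  set a1 : ({i} : Finset ℤ) → Bool := fun _ => a ⟨i, hi⟩ with ha1
  set a2 : ({i} : Finset ℤ) → Bool := fun _ => !(a ⟨i, hi⟩) with ha2
  have hset1 : cylinderEvent ({i} : Finset ℤ) a1 ∩ B = cylinderEvent S a := by
    ext ω
    constructor
    · rintro ⟨h1, h2⟩ j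
      by_cases hj : (j : ℤ) = i
      · obtain ⟨jv, hjmem⟩ := j
        simp only at hj
        subst hj
        exact h1 ⟨jv, Finset.mem_singleton_self jv⟩
      · exact h2 j hj
    · intro h
      refine ⟨fun k => ?_, fun j hj => h j⟩
      obtain ⟨kv, hkmem⟩ := k
      have hk : kv = i := Finset.mem_singleton.1 hkmem
      subst hk
      exact h ⟨kv, hi⟩
  have hset2 : cylinderEvent ({i} : Finset ℤ) a2 ∩ B = cylinderEvent S (flipA S i a) := by
    ext ω
    constructor
    · rintro ⟨h1, h2⟩ j
      by_cases hj : (j : ℤ) = i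
      · obtain ⟨jv, hjmem⟩ := j
        simp only at hj
        subst hj
        simpa [flipA] using h1 ⟨jv, Finset.mem_singleton_self jv⟩
      · simpa [flipA, hj] using h2 j hj
    · intro h
      refine ⟨fun k => ?_, fun j hj => ?_⟩
      · obtain ⟨kv, hkmem⟩ := k
        have hk : kv = i := Finset.mem_singleton.1 hkmem
        subst hk
        simpa [flipA] using h ⟨kv, hi⟩
      · simpa [flipA, hj] using h j
  have key1 : (μ (cylinderEvent S a)).toReal =
      ∫ ω in B, gibbsKernelInt Ψ ({i} : Finset ℤ) a1 ω ∂μ := by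
    rw [← hset1]; exact hμ.2 ({i} : Finset ℤ) a1 B hB
  have key2 : (μ (cylinderEvent S (flipA S i a))).toReal =
      ∫ ω in B, gibbsKernelInt Ψ ({i} : Finset ℤ) a2 ω ∂μ := by
    rw [← hset2]; exact hμ.2 ({i} : Finset ℤ) a2 B hB
  have hint1 : Integrable (gibbsKernelInt Ψ ({i} : Finset ℤ) a1) (μ.restrict B) :=
    (integrable_of_continuous μ _ (continuous_kernel_single Ψ hΨ i a1)).restrict
  have hint2 : Integrable (gibbsKernelInt Ψ ({i} : Finset ℤ) a2) (μ.restrict B) :=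
    (integrable_of_continuous μ _ (continuous_kernel_single Ψ hΨ i a2)).restrict
  rw [key1, key2]
  calc ∫ ω in B, gibbsKernelInt Ψ ({i} : Finset ℤ) a2 ω ∂μ
      ≤ ∫ ω in B, exp (2 * normInt Ψ) * gibbsKernelInt Ψ ({i} : Finset ℤ) a1 ω ∂μ :=
        integral_mono hint2 (hint1.const_mul _) (fun ω => kernel_ratio Ψ hΨ i a2 a1 ω)
    _ = exp (2 * normInt Ψ) * ∫ ω in B, gibbsKernelInt Ψ ({i} : Finset ℤ) a1 ω ∂μ :=
        integral_const_mul _ _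

end StatementSixAux
namespace StatementSixAux

/-! ### Oscillation lemmas -/

lemma osc_set_bddAbove (F : Config → ℝ) (hF : Continuous F) (k : ℤ) :
    BddAbove {d : ℝ | ∃ ξ η : Config, (∀ j : ℤ, j ≠ k → ξ j = η j) ∧ d = F ξ - F η} := by
  obtain ⟨M, hM⟩ := exists_bound F hF
  refine ⟨2 * M, ?_⟩
  rintro d ⟨ξ, η, -, rfl⟩
  have h1 := abs_le.1 (hM ξ)
  have h2 := abs_le.1 (hM η)
  linarith [h1.2, h2.1]

lemma zero_mem_osc_set (F : Config → ℝ) (k : ℤ) :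
    (0 : ℝ) ∈ {d : ℝ | ∃ ξ η : Config, (∀ j : ℤ, j ≠ k → ξ j = η j) ∧ d = F ξ - F η} :=
  ⟨fun _ => true, fun _ => true, fun _ _ => rfl, by ring⟩

lemma abs_sub_le_osc (F : Config → ℝ) (hF : Continuous F) (k : ℤ) (ξ η : Config)
    (h : ∀ j : ℤ, j ≠ k → ξ j = η j) : |F ξ - F η| ≤ osc F k := by
  rcases abs_cases (F ξ - F η) with ⟨he, -⟩ | ⟨he, -⟩ <;> rw [he]
  · exact le_csSup (osc_set_bddAbove F hF k) ⟨ξ, η, h, rfl⟩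
  · exact le_csSup (osc_set_bddAbove F hF k) ⟨η, ξ, fun j hj => (h j hj).symm, by ring⟩

lemma osc_nonneg (F : Config → ℝ) (hF : Continuous F) (k : ℤ) : 0 ≤ osc F k :=
  le_csSup (osc_set_bddAbove F hF k) (zero_mem_osc_set F k)

lemma osc_eq_zero (F : Config → ℝ) (S : Finset ℤ) (hF : dependsOn S F) (k : ℤ)
    (hk : k ∉ S) : osc F k = 0 := by
  have hset : {d : ℝ | ∃ ξ η : Config, (∀ j : ℤ, j ≠ k → ξ j = η j) ∧ d = F ξ - F η}
      = {0} := by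
    apply Set.eq_singleton_iff_unique_mem.2
    refine ⟨zero_mem_osc_set F k, ?_⟩
    rintro d ⟨ξ, η, hd, rfl⟩
    have : F ξ = F η := hF ξ η fun i hiS => hd i (fun hik => hk (hik ▸ hiS))
    rw [this]; ring
  unfold osc
  rw [hset, csSup_singleton]

lemma oscSq_eq_sum (F : Config → ℝ) (S : Finset ℤ) (hF : dependsOn S F) :
    oscSq F = ∑ k ∈ S, osc F k ^ 2 := by
  unfold oscSq
  refine tsum_eq_sum fun k hk => ?_
  rw [osc_eq_zero F S hF k hk]
  ring

lemma oscSq_nonneg (F : Config → ℝ) : 0 ≤ oscSq F :=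
  tsum_nonneg fun k => sq_nonneg _

/-! ### Elementary exponential inequality -/

lemma exp_half_sub_sq_le (x y : ℝ) :
    (exp (x / 2) - exp (y / 2)) ^ 2 ≤ ((x - y) / 2) ^ 2 * (exp x + exp y) := by
  have key : ∀ u v : ℝ, v ≤ u →
      (exp (u / 2) - exp (v / 2)) ^ 2 ≤ ((u - v) / 2) ^ 2 * (exp u + exp v) := by
    intro u v huv
    have h1 : 0 ≤ exp (u / 2) - exp (v / 2) := by
      have := exp_le_exp.2 (by linarith : v / 2 ≤ u / 2)
      linarith
    have h2 : exp (u / 2) - exp (v / 2) ≤ (u - v) / 2 * exp (u / 2) := by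
      have := add_one_le_exp ((v - u) / 2)
      have hmul := mul_le_mul_of_nonneg_left this (exp_pos (u / 2)).le
      rw [← exp_add] at hmul
      have : u / 2 + (v - u) / 2 = v / 2 := by ring
      rw [this] at hmul
      nlinarith [exp_pos (u / 2)]
    have h3 : (exp (u / 2) - exp (v / 2)) ^ 2 ≤ ((u - v) / 2) ^ 2 * (exp (u / 2)) ^ 2 := by
      calc (exp (u / 2) - exp (v / 2)) ^ 2 ≤ ((u - v) / 2 * exp (u / 2)) ^ 2 := by
            apply sq_le_sq' <;> nlinarith
        _ = ((u - v) / 2) ^ 2 * (exp (u / 2)) ^ 2 := by ring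
    have h4 : (exp (u / 2)) ^ 2 = exp u := by
      rw [sq, ← exp_add]
      norm_num
    calc (exp (u / 2) - exp (v / 2)) ^ 2 ≤ ((u - v) / 2) ^ 2 * (exp (u / 2)) ^ 2 := h3
      _ = ((u - v) / 2) ^ 2 * exp u := by rw [h4]
      _ ≤ ((u - v) / 2) ^ 2 * (exp u + exp v) := by
          nlinarith [exp_pos v, sq_nonneg ((u - v) / 2)]
  rcases le_total y x with h | h
  · exact key x y h
  · have := key y x h
    calc (exp (x / 2) - exp (y / 2)) ^ 2 = (exp (y / 2) - exp (x / 2)) ^ 2 := by ring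
      _ ≤ ((y - x) / 2) ^ 2 * (exp y + exp x) := this
      _ = ((x - y) / 2) ^ 2 * (exp x + exp y) := by ring

end StatementSixAux
namespace StatementSixAux

section Herbst

variable {A : Type} [Fintype A]

open Filter Topology

lemma herbst (p F : A → ℝ) (hp : ∀ a, 0 ≤ p a) (h1 : ∑ a, p a = 1) (K : ℝ) (hK : 0 ≤ K)
    (hEnt : ∀ t : ℝ, 0 < t → t ≤ 1 →
      t * (∑ a, p a * (F a * exp (t * F a))) -
        (∑ a, p a * exp (t * F a)) * Real.log (∑ a, p a * exp (t * F a))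
        ≤ K * t ^ 2 * (∑ a, p a * exp (t * F a))) :
    (∑ a, p a * exp (F a)) ≤ exp ((∑ a, p a * F a) + K) := by
  classical
  set ψ : ℝ → ℝ := fun t => ∑ a, p a * exp (t * F a) with hψdef
  set ψ' : ℝ → ℝ := fun t => ∑ a, p a * (F a * exp (t * F a)) with hψ'def
  have hex : ∃ a, 0 < p a := by
    by_contra hcon
    push_neg at hcon
    have : ∑ a, p a = 0 := Finset.sum_eq_zero fun a _ => le_antisymm (hcon a) (hp a)
    rw [h1] at this; norm_num at this
  obtain ⟨a₀, ha₀⟩ := hex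
  have hψpos : ∀ t, 0 < ψ t := by
    intro t
    refine Finset.sum_pos' (fun a _ => mul_nonneg (hp a) (exp_pos _).le) ?_
    exact ⟨a₀, Finset.mem_univ a₀, mul_pos ha₀ (exp_pos _)⟩
  have hderiv : ∀ t, HasDerivAt ψ (ψ' t) t := by
    intro t
    refine HasDerivAt.fun_sum fun a _ => ?_
    have h0 : HasDerivAt (fun t : ℝ => t * F a) (F a) t := hasDerivAt_mul_const (F a)
    have hexp : HasDerivAt (fun t : ℝ => exp (t * F a)) (exp (t * F a) * F a) t := h0.exp
    have h2 := hexp.const_mul (p a)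
    exact h2.congr_deriv (by ring)
  set L : ℝ → ℝ := fun t => Real.log (ψ t) with hLdef
  have hLderiv : ∀ t, HasDerivAt L (ψ' t / ψ t) t := fun t =>
    (hderiv t).log (ne_of_gt (hψpos t))
  have hψ0 : ψ 0 = 1 := by
    simp only [hψdef, zero_mul, exp_zero, mul_one]
    exact h1
  have hL0 : L 0 = 0 := by rw [hLdef]; simp [hψ0]
  have hψ'0 : ψ' 0 = ∑ a, p a * F a := by
    simp only [hψ'def, zero_mul, exp_zero, mul_one]
  -- monotonicity step
  have hg : ∀ ε : ℝ, 0 < ε → ε < 1 → L 1 ≤ L ε / ε + K := by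
    intro ε hε hε1
    set g : ℝ → ℝ := fun t => K * t - L t / t with hgdef
    have hgderiv : ∀ t : ℝ, 0 < t →
        HasDerivAt g (K - (ψ' t / ψ t * t - L t * 1) / t ^ 2) t := by
      intro t ht
      have hd : HasDerivAt (fun t => L t / t) ((ψ' t / ψ t * t - L t * 1) / t ^ 2) t :=
        (hLderiv t).div (hasDerivAt_id t) (ne_of_gt ht)
      have hk : HasDerivAt (fun t : ℝ => K * t) K t := by
        simpa using (hasDerivAt_id t).const_mul K
      exact hk.sub hd
    have hgd_nonneg : ∀ t : ℝ, 0 < t → t ≤ 1 →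
        0 ≤ K - (ψ' t / ψ t * t - L t * 1) / t ^ 2 := by
      intro t ht ht1
      have hE := hEnt t ht ht1
      have hrw : ψ' t / ψ t * t - L t * 1 = (t * ψ' t - ψ t * L t) / ψ t := by
        field_simp [ne_of_gt (hψpos t)]
      have hnum : ψ' t / ψ t * t - L t * 1 ≤ K * t ^ 2 := by
        rw [hrw, div_le_iff₀ (hψpos t)]
        calc t * ψ' t - ψ t * L t ≤ K * t ^ 2 * ψ t := hE
          _ = K * t ^ 2 * ψ t := rfl
      have ht2 : (0:ℝ) < t ^ 2 := by positivity
      have hdiv : (ψ' t / ψ t * t - L t * 1) / t ^ 2 ≤ K := by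
        rw [div_le_iff₀ ht2]
        calc ψ' t / ψ t * t - L t * 1 ≤ K * t ^ 2 := hnum
          _ = K * t ^ 2 := rfl
      linarith
    have hmono : MonotoneOn g (Set.Icc ε 1) := by
      refine monotoneOn_of_deriv_nonneg (convex_Icc ε 1) ?_ ?_ ?_
      · intro t ht
        have htpos : 0 < t := lt_of_lt_of_le hε ht.1
        exact ((hgderiv t htpos).continuousAt).continuousWithinAt
      · intro t ht
        rw [interior_Icc] at ht
        exact ((hgderiv t (hε.trans ht.1)).differentiableAt).differentiableWithinAt
      · intro t ht
        rw [interior_Icc] at ht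
        rw [((hgderiv t (hε.trans ht.1)).deriv)]
        exact hgd_nonneg t (hε.trans ht.1) ht.2.le
    have h01 : g ε ≤ g 1 :=
      hmono (Set.mem_Icc.2 ⟨le_refl ε, hε1.le⟩) (Set.mem_Icc.2 ⟨hε1.le, le_refl 1⟩) hε1.le
    have hgε : g ε = K * ε - L ε / ε := rfl
    have hg1 : g 1 = K - L 1 := by simp [hgdef]
    have hKε : 0 ≤ K * ε := mul_nonneg hK hε.le
    rw [hgε, hg1] at h01
    linarith
  -- limit step
  have hslope : Tendsto (fun ε => L ε / ε) (𝓝[>] (0:ℝ)) (𝓝 (∑ a, p a * F a)) := by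
    have hd : HasDerivAt L (∑ a, p a * F a) 0 := by
      have := hLderiv 0
      rwa [hψ0, hψ'0, div_one] at this
    have htend := hasDerivAt_iff_tendsto_slope.1 hd
    have hmono2 : 𝓝[>] (0:ℝ) ≤ 𝓝[≠] (0:ℝ) :=
      nhdsWithin_mono 0 (fun x hx => ne_of_gt hx)
    refine (htend.mono_left hmono2).congr' ?_
    filter_upwards [self_mem_nhdsWithin] with x hx
    rw [slope_def_field, hL0]
    rw [div_eq_div_iff (sub_ne_zero.2 (ne_of_gt hx)) (ne_of_gt hx)]
    ring
  have hfin : L 1 - K ≤ ∑ a, p a * F a := by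
    refine ge_of_tendsto hslope ?_
    filter_upwards [Ioo_mem_nhdsGT_of_mem (Set.mem_Ico.2 ⟨le_refl 0, zero_lt_one⟩)] with ε hε
    have := hg ε hε.1 hε.2
    linarith
  have hψ1 : ψ 1 = exp (L 1) := (exp_log (hψpos 1)).symm
  have : ψ 1 ≤ exp ((∑ a, p a * F a) + K) := by
    rw [hψ1]
    apply exp_le_exp.2
    linarith
  simpa [hψdef, one_mul] using this

end Herbst

end StatementSixAux
/-- If `μ` is the unique Gibbs measure for a SUAC interaction `Ψ` and
satisfies the log-Sobolev inequality with constant `D > 0`, then `μ` satisfies the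
Gaussian Concentration Bound with constant `D(e^{2‖Ψ‖}+1)/2`. -/
theorem statement6 (Ψ : Finset ℤ → Config → ℝ) (hΨ : IsSUAC Ψ)
    (μ : Measure Config) (hμ : IsGibbsInt Ψ μ)
    (huniq : ∀ μ' : Measure Config, IsGibbsInt Ψ μ' → μ' = μ)
    (D : ℝ) (hD : 0 < D) (hLSI : SatisfiesLSI μ D) :
    GCB μ (D * (exp (2 * normInt Ψ) + 1) / 2) := by
  classical
  intro F hFloc hFcont
  obtain ⟨S, hS⟩ := hFloc
  haveI : IsProbabilityMeasure μ := hμ.1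
  set W : ℝ := normInt Ψ with hW
  set C : ℝ := D * (exp (2 * W) + 1) / 2 with hC
  set K : ℝ := C * oscSq F with hKdef
  set p : (S → Bool) → ℝ := fun a => (μ (cylinderEvent S a)).toReal with hp
  set FA : (S → Bool) → ℝ := fun a => F (StatementSixAux.cfg S a) with hFA
  have hpnn : ∀ a, 0 ≤ p a := fun a => ENNReal.toReal_nonneg
  have hpsum : ∑ a, p a = 1 := by
    rw [hp]; exact StatementSixAux.sum_p_eq_one μ S
  have hCnn : 0 ≤ C := by
    rw [hC]
    apply div_nonneg (mul_nonneg hD.le (by positivity)) (by norm_num)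
  have hKnn : 0 ≤ K := mul_nonneg hCnn (StatementSixAux.oscSq_nonneg F)
  -- the entropy bound from LSI
  have hEnt : ∀ t : ℝ, 0 < t → t ≤ 1 →
      t * (∑ a, p a * (FA a * exp (t * FA a))) -
        (∑ a, p a * exp (t * FA a)) * Real.log (∑ a, p a * exp (t * FA a))
        ≤ K * t ^ 2 * (∑ a, p a * exp (t * FA a)) := by
    intro t ht ht1
    set f : Config → ℝ := fun ω => exp (t * F ω / 2) with hf
    have hfloc : IsLocal f := ⟨S, fun ω η h => by rw [hf]; simp only; rw [hS ω η h]⟩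
    have hfcont : Continuous f := ((continuous_const.mul hFcont).div_const 2).rexp
    have hLSIf := hLSI f hfloc hfcont
    -- identify f² with exp (t F)
    have hfsq : (fun ω => f ω ^ 2) = fun ω => exp (t * F ω) := by
      funext ω
      rw [hf]; simp only
      rw [sq, ← exp_add]
      congr 1
      ring
    have hg1 : dependsOn S (fun ω => exp (t * F ω)) := fun ω η h => by
      simp only [hS ω η h]
    have hg2 : dependsOn S (fun ω => exp (t * F ω) * Real.log (exp (t * F ω))) :=
      fun ω η h => by simp only [hS ω η h]
    have e1 : ∫ ω, exp (t * F ω) ∂μ = ∑ a, p a * exp (t * FA a) := by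
      rw [StatementSixAux.integral_local μ S _ hg1]
    have e2 : ∫ ω, exp (t * F ω) * Real.log (exp (t * F ω)) ∂μ
        = ∑ a, p a * (exp (t * FA a) * (t * FA a)) := by
      rw [StatementSixAux.integral_local μ S _ hg2]
      simp [Real.log_exp, hp, hFA]
    have hent_eq : entropy μ (fun ω => f ω ^ 2)
        = t * (∑ a, p a * (FA a * exp (t * FA a))) -
          (∑ a, p a * exp (t * FA a)) * Real.log (∑ a, p a * exp (t * FA a)) := by
      rw [hfsq]
      unfold entropy
      rw [e1, e2]
      congr 1
      rw [Finset.mul_sum]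
      refine Finset.sum_congr rfl fun a _ => by ring
    -- the Dirichlet form
    have hflip_out : ∀ i : ℤ, i ∉ S → ∀ ω, f (flipAt i ω) = f ω := by
      intro i hi ω
      have hFf : F (flipAt i ω) = F ω := by
        refine hS _ _ fun j hj => ?_
        have hij : j ≠ i := fun hji => hi (hji ▸ hj)
        simp [flipAt, hij]
      rw [hf]; simp only [hFf]
    have htsum : ∀ ω, (∑' i : ℤ, (f ω - f (flipAt i ω)) ^ 2)
        = ∑ i ∈ S, (f ω - f (flipAt i ω)) ^ 2 := by
      intro ω
      refine tsum_eq_sum fun i hi => ?_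
      rw [hflip_out i hi ω]
      ring
    have hg3 : dependsOn S (fun ω => ∑ i ∈ S, (f ω - f (flipAt i ω)) ^ 2) := by
      intro ω η h
      refine Finset.sum_congr rfl fun i hiS => ?_
      have h1 : f ω = f η := by rw [hf]; simp only; rw [hS ω η h]
      have h2 : f (flipAt i ω) = f (flipAt i η) := by
        rw [hf]; simp only
        congr 1
        have : F (flipAt i ω) = F (flipAt i η) := by
          refine hS _ _ fun j hj => ?_
          by_cases hji : j = i
          · subst hji; simp [flipAt, h j hj]
          · simp [flipAt, hji, h j hj]
        rw [this]
      rw [h1, h2]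
    have e3 : ∫ ω, (∑' i : ℤ, (f ω - f (flipAt i ω)) ^ 2) ∂μ
        = ∑ a, p a * ∑ i ∈ S, (f (StatementSixAux.cfg S a)
            - f (flipAt i (StatementSixAux.cfg S a))) ^ 2 := by
      simp only [htsum]
      rw [StatementSixAux.integral_local μ S _ hg3]
    -- identification of flipped configurations
    have hflip_cfg : ∀ (a : S → Bool) (i : ℤ), i ∈ S →
        F (flipAt i (StatementSixAux.cfg S a))
          = FA (StatementSixAux.flipA S i a) := by
      intro a i hi
      rw [hFA]; simp only
      refine hS _ _ fun j hj => ?_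
      by_cases hji : j = i
      · subst hji
        rw [StatementSixAux.cfg_spec S _ j hj]
        simp [flipAt, StatementSixAux.flipA, StatementSixAux.cfg_spec S a j hj]
      · rw [StatementSixAux.cfg_spec S _ j hj]
        simp [flipAt, hji, StatementSixAux.flipA, StatementSixAux.cfg_spec S a j hj]
    -- per-term bound
    have hterm : ∀ (a : S → Bool) (i : ℤ), i ∈ S →
        (f (StatementSixAux.cfg S a) - f (flipAt i (StatementSixAux.cfg S a))) ^ 2
          ≤ t ^ 2 / 4 * osc F i ^ 2 *
              (exp (t * FA a) + exp (t * FA (StatementSixAux.flipA S i a))) := by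
      intro a i hi
      have hx : f (StatementSixAux.cfg S a) = exp (t * FA a / 2) := by
        rw [hf, hFA]
      have hy : f (flipAt i (StatementSixAux.cfg S a))
          = exp (t * FA (StatementSixAux.flipA S i a) / 2) := by
        rw [hf]; simp only
        rw [hflip_cfg a i hi]
      rw [hx, hy]
      have hbase := StatementSixAux.exp_half_sub_sq_le (t * FA a)
        (t * FA (StatementSixAux.flipA S i a))
      refine hbase.trans ?_
      have hdiff : |FA a - FA (StatementSixAux.flipA S i a)| ≤ osc F i := by
        rw [hFA]; simp only
        refine StatementSixAux.abs_sub_le_osc F hFcont i _ _ fun j hj => ?_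
        by_cases hjS : j ∈ S
        · rw [StatementSixAux.cfg_spec S _ j hjS, StatementSixAux.cfg_spec S _ j hjS]
          simp [StatementSixAux.flipA, hj]
        · simp [StatementSixAux.cfg, concat, hjS]
      have hsq : (FA a - FA (StatementSixAux.flipA S i a)) ^ 2 ≤ osc F i ^ 2 := by
        nlinarith [abs_nonneg (FA a - FA (StatementSixAux.flipA S i a)),
          sq_abs (FA a - FA (StatementSixAux.flipA S i a))]
      have hexps : 0 ≤ exp (t * FA a) + exp (t * FA (StatementSixAux.flipA S i a)) := by
        positivity
      have hco : ((t * FA a - t * FA (StatementSixAux.flipA S i a)) / 2) ^ 2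
          = t ^ 2 / 4 * (FA a - FA (StatementSixAux.flipA S i a)) ^ 2 := by ring
      rw [hco]
      apply mul_le_mul_of_nonneg_right ?_ hexps
      apply mul_le_mul_of_nonneg_left hsq
      positivity
    -- summing the bound
    set ψt : ℝ := ∑ a, p a * exp (t * FA a) with hψt
    have hψtnn : 0 ≤ ψt :=
      Finset.sum_nonneg fun a _ => mul_nonneg (hpnn a) (exp_pos _).le
    have hflipsum : ∀ i : ℤ, i ∈ S →
        (∑ a, p a * exp (t * FA (StatementSixAux.flipA S i a))) ≤ exp (2 * W) * ψt := by
      intro i hi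
      have hre : (∑ a, p a * exp (t * FA (StatementSixAux.flipA S i a)))
          = ∑ a, p (StatementSixAux.flipA S i a) * exp (t * FA a) := by
        refine Fintype.sum_bijective (StatementSixAux.flipA S i)
          (StatementSixAux.flipA_bijective S i) _ _ fun a => ?_
        rw [StatementSixAux.flipA_invol]
      rw [hre, hψt, Finset.mul_sum]
      refine Finset.sum_le_sum fun a _ => ?_
      have hpf : p (StatementSixAux.flipA S i a) ≤ exp (2 * W) * p a := by
        rw [hp, hW]; simp only
        exact StatementSixAux.p_flip_le Ψ hΨ μ hμ S i hi a
      calc p (StatementSixAux.flipA S i a) * exp (t * FA a)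
          ≤ (exp (2 * W) * p a) * exp (t * FA a) :=
            mul_le_mul_of_nonneg_right hpf (exp_pos _).le
        _ = exp (2 * W) * (p a * exp (t * FA a)) := by ring
    have hdirichlet : (∑ a, p a * ∑ i ∈ S, (f (StatementSixAux.cfg S a)
          - f (flipAt i (StatementSixAux.cfg S a))) ^ 2)
        ≤ t ^ 2 / 4 * (1 + exp (2 * W)) * ψt * oscSq F := by
      have hswap : (∑ a, p a * ∑ i ∈ S, (f (StatementSixAux.cfg S a)
            - f (flipAt i (StatementSixAux.cfg S a))) ^ 2)
          = ∑ i ∈ S, ∑ a, p a * (f (StatementSixAux.cfg S a)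
            - f (flipAt i (StatementSixAux.cfg S a))) ^ 2 := by
        simp_rw [Finset.mul_sum]
        rw [Finset.sum_comm]
      rw [hswap]
      have hperi : ∀ i ∈ S, (∑ a, p a * (f (StatementSixAux.cfg S a)
            - f (flipAt i (StatementSixAux.cfg S a))) ^ 2)
          ≤ t ^ 2 / 4 * (1 + exp (2 * W)) * ψt * osc F i ^ 2 := by
        intro i hi
        calc (∑ a, p a * (f (StatementSixAux.cfg S a)
              - f (flipAt i (StatementSixAux.cfg S a))) ^ 2)
            ≤ ∑ a, p a * (t ^ 2 / 4 * osc F i ^ 2 *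
                (exp (t * FA a) + exp (t * FA (StatementSixAux.flipA S i a)))) :=
              Finset.sum_le_sum fun a _ =>
                mul_le_mul_of_nonneg_left (hterm a i hi) (hpnn a)
          _ = t ^ 2 / 4 * osc F i ^ 2 *
                ((∑ a, p a * exp (t * FA a)) +
                 (∑ a, p a * exp (t * FA (StatementSixAux.flipA S i a)))) := by
              rw [← Finset.sum_add_distrib, Finset.mul_sum]
              refine Finset.sum_congr rfl fun a _ => by ring
          _ ≤ t ^ 2 / 4 * osc F i ^ 2 * (ψt + exp (2 * W) * ψt) := by
              refine mul_le_mul_of_nonneg_left ?_ (by positivity)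
              have := hflipsum i hi
              rw [hψt]
              linarith
          _ = t ^ 2 / 4 * (1 + exp (2 * W)) * ψt * osc F i ^ 2 := by ring
      calc (∑ i ∈ S, ∑ a, p a * (f (StatementSixAux.cfg S a)
            - f (flipAt i (StatementSixAux.cfg S a))) ^ 2)
          ≤ ∑ i ∈ S, t ^ 2 / 4 * (1 + exp (2 * W)) * ψt * osc F i ^ 2 :=
            Finset.sum_le_sum hperi
        _ = t ^ 2 / 4 * (1 + exp (2 * W)) * ψt * ∑ i ∈ S, osc F i ^ 2 :=
            (Finset.mul_sum _ _ _).symm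
        _ = t ^ 2 / 4 * (1 + exp (2 * W)) * ψt * oscSq F := by
            rw [StatementSixAux.oscSq_eq_sum F S hS]
    -- put everything together
    rw [hent_eq] at hLSIf
    rw [e3] at hLSIf
    calc t * (∑ a, p a * (FA a * exp (t * FA a))) -
          (∑ a, p a * exp (t * FA a)) * Real.log (∑ a, p a * exp (t * FA a))
        ≤ 2 * D * (∑ a, p a * ∑ i ∈ S, (f (StatementSixAux.cfg S a)
            - f (flipAt i (StatementSixAux.cfg S a))) ^ 2) := hLSIf
      _ ≤ 2 * D * (t ^ 2 / 4 * (1 + exp (2 * W)) * ψt * oscSq F) :=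
          mul_le_mul_of_nonneg_left hdirichlet (by positivity)
      _ = K * t ^ 2 * ψt := by
          rw [hKdef, hC]
          ring
  -- apply the Herbst lemma
  have hherbst := StatementSixAux.herbst p FA hpnn hpsum K hKnn hEnt
  -- conclude
  have hEF : ∫ ω, F ω ∂μ = ∑ a, p a * FA a := StatementSixAux.integral_local μ S F hS
  have hgfin : dependsOn S (fun ω => exp (F ω - ∫ η, F η ∂μ)) :=
    fun ω η h => by simp only [hS ω η h]
  rw [StatementSixAux.integral_local μ S _ hgfin]
  have hfinal : (∑ a, p a * exp (FA a - ∫ η, F η ∂μ))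
      ≤ exp K := by
    have hre : (∑ a, p a * exp (FA a - ∫ η, F η ∂μ))
        = (∑ a, p a * exp (FA a)) * exp (-(∫ η, F η ∂μ)) := by
      rw [Finset.sum_mul]
      refine Finset.sum_congr rfl fun a _ => ?_
      rw [mul_assoc, ← exp_add, sub_eq_add_neg]
    rw [hre]
    calc (∑ a, p a * exp (FA a)) * exp (-(∫ η, F η ∂μ))
        ≤ exp ((∑ a, p a * FA a) + K) * exp (-(∫ η, F η ∂μ)) :=
          mul_le_mul_of_nonneg_right hherbst (exp_pos _).le
      _ = exp ((∑ a, p a * FA a) + K - ∫ η, F η ∂μ) := by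
          rw [← exp_add, ← sub_eq_add_neg]
      _ = exp K := by rw [hEF]; ring_nf
  exact hfinal

end
end

section
/- Let X be a compact metrizable topological space with its Borel σ-algebra, S : X → X a continuous map, (μ_n) a sequence of Borel probability measures on X converging weakly to a Borel probability measure μ, and h_n, h : X → ℝ continuous functions with h_n → h uniformly on X. Suppose that for every n the pushforward μ_n ∘ S^{−1} equals the measure with density h_n with respect to μ_n, i.e. ∫ f∘S dμ_n = ∫ f·h_n dμ_n for every continuous f : X → ℝ. Then μ ∘ S^{−1} equals the measure with density h with respect to μ; in particular μ ∘ S^{−1} is absolutely continuous with respect to μ with Radon–Nikodym density h. -/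
open MeasureTheory

/-- On a compact metrizable space, if `μ_n → μ` weakly, `h_n → h`
uniformly, and for each `n` the pushforward `μ_n ∘ S⁻¹` has density `h_n` w.r.t. `μ_n`
(tested against continuous functions), then `μ ∘ S⁻¹` is the measure with density `h`
w.r.t. `μ`; in particular `μ ∘ S⁻¹ ≪ μ` with Radon–Nikodym density `h`. -/
theorem statement9 {X : Type*} [TopologicalSpace X] [CompactSpace X] [TopologicalSpace.MetrizableSpace X]
    [MeasurableSpace X] [BorelSpace X]
    (S : X → X) (hS : Continuous S)
    (μseq : ℕ → Measure X) (μ : Measure X)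
    (hprob : ∀ n, IsProbabilityMeasure (μseq n)) (hμprob : IsProbabilityMeasure μ)
    (hweak : ∀ f : X → ℝ, Continuous f →
      Filter.Tendsto (fun n => ∫ x, f x ∂(μseq n)) Filter.atTop (nhds (∫ x, f x ∂μ)))
    (hseq : ℕ → X → ℝ) (h : X → ℝ)
    (hcont : ∀ n, Continuous (hseq n)) (hhcont : Continuous h)
    (hunif : TendstoUniformly hseq h Filter.atTop)
    (hdens : ∀ n, ∀ f : X → ℝ, Continuous f →
      (∫ x, f (S x) ∂(μseq n)) = ∫ x, f x * hseq n x ∂(μseq n)) :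
    μ.map S = μ.withDensity (fun x => ENNReal.ofReal (h x)) ∧ μ.map S ≪ μ := by
  letI : MetricSpace X := TopologicalSpace.metrizableSpaceMetric X
  -- Step 1: the limit identity for every continuous f
  have key : ∀ f : X → ℝ, Continuous f →
      (∫ x, f (S x) ∂μ) = ∫ x, f x * h x ∂μ := by
    intro f hf
    -- sup bound on |f|
    set F : BoundedContinuousFunction X ℝ := BoundedContinuousFunction.mkOfCompact ⟨f, hf⟩
    set C : ℝ := ‖F‖ with hCdef
    have hC0 : 0 ≤ C := norm_nonneg F
    have hC : ∀ x, |f x| ≤ C := fun x => F.norm_coe_le_norm x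
    have lim1 : Filter.Tendsto (fun n => ∫ x, f (S x) ∂(μseq n)) Filter.atTop
        (nhds (∫ x, f (S x) ∂μ)) := hweak (fun x => f (S x)) (hf.comp hS)
    have lim2 : Filter.Tendsto (fun n => ∫ x, f x * hseq n x ∂(μseq n)) Filter.atTop
        (nhds (∫ x, f x * h x ∂μ)) := by
      have limA : Filter.Tendsto (fun n => ∫ x, f x * h x ∂(μseq n)) Filter.atTop
          (nhds (∫ x, f x * h x ∂μ)) := hweak (fun x => f x * h x) (hf.mul hhcont)
      have limD : Filter.Tendsto
          (fun n => (∫ x, f x * hseq n x ∂(μseq n)) - ∫ x, f x * h x ∂(μseq n))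
          Filter.atTop (nhds 0) := by
        rw [NormedAddCommGroup.tendsto_nhds_zero]
        intro ε hε
        have hδ : (0:ℝ) < ε / (C + 1) := by positivity
        filter_upwards [Metric.tendstoUniformly_iff.mp hunif (ε / (C + 1)) hδ] with n hn
        have := hprob n
        have hint1 : Integrable (fun x => f x * hseq n x) (μseq n) :=
          (hf.mul (hcont n)).integrable_of_hasCompactSupport
            (HasCompactSupport.of_compactSpace _)
        have hint2 : Integrable (fun x => f x * h x) (μseq n) :=
          (hf.mul hhcont).integrable_of_hasCompactSupport
            (HasCompactSupport.of_compactSpace _)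
        rw [← integral_sub hint1 hint2]
        have hb : ∀ x, ‖f x * hseq n x - f x * h x‖ ≤ C * (ε / (C + 1)) := by
          intro x
          have heq : f x * hseq n x - f x * h x = f x * (hseq n x - h x) := by ring
          rw [heq, norm_mul]
          have h1 : ‖hseq n x - h x‖ ≤ ε / (C + 1) := by
            have := hn x
            rw [Real.dist_eq, abs_sub_comm] at this
            exact le_of_lt this
          exact mul_le_mul (hC x) h1 (norm_nonneg _) hC0
        calc ‖∫ x, (f x * hseq n x - f x * h x) ∂(μseq n)‖
            ≤ C * (ε / (C + 1)) * ((μseq n) Set.univ).toReal :=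
              norm_integral_le_of_norm_le_const (Filter.Eventually.of_forall hb)
          _ = C * (ε / (C + 1)) := by simp
          _ < ε := by
              rw [mul_div_assoc', div_lt_iff₀ (by positivity)]
              nlinarith
      have := limD.add limA
      simpa using this
    have lim2' : Filter.Tendsto (fun n => ∫ x, f (S x) ∂(μseq n)) Filter.atTop
        (nhds (∫ x, f x * h x ∂μ)) := by
      simpa only [funext fun n => hdens n f hf] using lim2
    exact tendsto_nhds_unique lim1 lim2'
  -- Step 2: h ≥ 0 a.e.
  have hae : 0 ≤ᵐ[μ] h := by
    set g : X → ℝ := fun x => max (-h x) 0 with hg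
    have hgc : Continuous g := (hhcont.neg).max continuous_const
    have hkey := key g hgc
    have hgS : 0 ≤ ∫ x, g (S x) ∂μ :=
      integral_nonneg fun x => le_max_right _ _
    have hgh : ∀ x, g x * h x = -(g x ^ 2) := by
      intro x
      rcases le_or_gt 0 (h x) with hx | hx
      · have : g x = 0 := max_eq_right (by linarith)
        simp [this]
      · have : g x = -h x := max_eq_left (by linarith)
        rw [this]; ring
    have hint : Integrable (fun x => g x ^ 2) μ :=
      (hgc.pow 2).integrable_of_hasCompactSupport (HasCompactSupport.of_compactSpace _)
    have h2 : ∫ x, g x ^ 2 ∂μ ≤ 0 := by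
      have hneg : ∫ x, g x * h x ∂μ = -∫ x, g x ^ 2 ∂μ := by
        simp_rw [hgh]; exact integral_neg _
      rw [hkey, hneg] at hgS
      linarith
    have h3 : ∫ x, g x ^ 2 ∂μ = 0 :=
      le_antisymm h2 (integral_nonneg fun x => sq_nonneg _)
    have h4 : (fun x => g x ^ 2) =ᵐ[μ] 0 :=
      (integral_eq_zero_iff_of_nonneg (fun x => sq_nonneg _) hint).mp h3
    filter_upwards [h4] with x hx
    simp only [Pi.zero_apply] at hx ⊢
    have hg0 : g x = 0 := pow_eq_zero_iff two_ne_zero |>.mp hx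
    simp only [hg] at hg0
    have := le_max_left (-h x) (0:ℝ)
    rw [hg0] at this
    linarith
  -- Step 3: conclude
  haveI : IsProbabilityMeasure (μ.map S) :=
    Measure.isProbabilityMeasure_map hS.measurable.aemeasurable
  have hwmeas : Measurable fun x => ENNReal.ofReal (h x) :=
    ENNReal.measurable_ofReal.comp hhcont.measurable
  have heq : μ.map S = μ.withDensity (fun x => ENNReal.ofReal (h x)) := by
    apply ext_of_forall_lintegral_eq_of_IsFiniteMeasure
    intro f
    have hfc : Continuous fun x => (f x : ℝ) := NNReal.continuous_coe.comp f.continuous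
    have hk := key (fun x => (f x : ℝ)) hfc
    have hfm : Measurable fun x => (f x : ENNReal) :=
      (ENNReal.continuous_coe.comp f.continuous).measurable
    have hintS : Integrable (fun x => ((f (S x)) : ℝ)) μ :=
      (hfc.comp hS).integrable_of_hasCompactSupport (HasCompactSupport.of_compactSpace _)
    have hinth : Integrable (fun x => (f x : ℝ) * h x) μ :=
      (hfc.mul hhcont).integrable_of_hasCompactSupport (HasCompactSupport.of_compactSpace _)
    calc ∫⁻ x, (f x : ENNReal) ∂(μ.map S)
        = ∫⁻ x, (f (S x) : ENNReal) ∂μ := lintegral_map hfm hS.measurable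
      _ = ∫⁻ x, ENNReal.ofReal ((f (S x) : ℝ)) ∂μ := by
          simp [ENNReal.ofReal_coe_nnreal]
      _ = ENNReal.ofReal (∫ x, ((f (S x)) : ℝ) ∂μ) :=
          (ofReal_integral_eq_lintegral_ofReal hintS
            (Filter.Eventually.of_forall fun x => (f (S x)).coe_nonneg)).symm
      _ = ENNReal.ofReal (∫ x, (f x : ℝ) * h x ∂μ) := by rw [hk]
      _ = ∫⁻ x, ENNReal.ofReal ((f x : ℝ) * h x) ∂μ :=
          ofReal_integral_eq_lintegral_ofReal hinth
            (hae.mono fun x hx => mul_nonneg (f x).coe_nonneg hx)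
      _ = ∫⁻ x, ENNReal.ofReal (h x) * (f x : ENNReal) ∂μ := by
          congr 1; funext x
          rw [ENNReal.ofReal_mul (f x).coe_nonneg, ENNReal.ofReal_coe_nnreal, mul_comm]
      _ = ∫⁻ x, (f x : ENNReal) ∂(μ.withDensity fun x => ENNReal.ofReal (h x)) :=
          (lintegral_withDensity_eq_lintegral_mul μ hwmeas hfm).symm
  exact ⟨heq, heq ▸ withDensity_absolutelyContinuous μ _⟩
end

section
/- Let (Ω, F, μ) be a probability space, f : Ω → ℝ a bounded measurable function, and C ≥ 0. Assume that for every λ ∈ [0,1], λ·∫ f·e^{λf} dμ − (∫ e^{λf} dμ)·log(∫ e^{λf} dμ) ≤ C·λ²·∫ e^{λf} dμ. Then ∫ exp(f − ∫ f dμ) dμ ≤ e^C. -/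
open MeasureTheory Real Filter

/-- **Herbst argument.** If for a bounded measurable `f` on a probability
space one has `λ∫ f e^{λf} dμ - Z(λ) log Z(λ) ≤ C λ² Z(λ)` for every `λ ∈ [0,1]`,
where `Z(λ) = ∫ e^{λf} dμ`, then `∫ exp(f - ∫ f dμ) dμ ≤ e^C`. -/
theorem statement11 {Ω : Type*} [MeasurableSpace Ω] (μ : Measure Ω) [IsProbabilityMeasure μ]
    (f : Ω → ℝ) (hf : Measurable f) (hbdd : ∃ B : ℝ, ∀ x, |f x| ≤ B)
    (C : ℝ) (hC : 0 ≤ C)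
    (h : ∀ lam ∈ Set.Icc (0 : ℝ) 1,
      lam * (∫ x, f x * Real.exp (lam * f x) ∂μ)
        - (∫ x, Real.exp (lam * f x) ∂μ) * Real.log (∫ x, Real.exp (lam * f x) ∂μ)
      ≤ C * lam ^ 2 * ∫ x, Real.exp (lam * f x) ∂μ) :
    (∫ x, Real.exp (f x - ∫ y, f y ∂μ) ∂μ) ≤ Real.exp C := by
  obtain ⟨B₀, hB₀⟩ := hbdd
  set B : ℝ := |B₀| with hBdef
  have hB : ∀ x, |f x| ≤ B := fun x => (hB₀ x).trans (le_abs_self _)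
  have hB0 : 0 ≤ B := abs_nonneg _
  set Z : ℝ → ℝ := fun lam => ∫ x, Real.exp (lam * f x) ∂μ with hZdef
  set Z' : ℝ → ℝ := fun lam => ∫ x, f x * Real.exp (lam * f x) ∂μ with hZ'def
  -- integrability
  have hint : ∀ lam : ℝ, Integrable (fun x => Real.exp (lam * f x)) μ := by
    intro lam
    refine Integrable.mono' (integrable_const (Real.exp (|lam| * B)))
      ((hf.const_mul lam).exp.aestronglyMeasurable) ?_
    filter_upwards with x
    rw [Real.norm_eq_abs, abs_of_pos (Real.exp_pos _)]
    apply Real.exp_le_exp.mpr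
    calc lam * f x ≤ |lam * f x| := le_abs_self _
      _ = |lam| * |f x| := abs_mul _ _
      _ ≤ |lam| * B := by gcongr; exact hB x
  have hZpos : ∀ lam : ℝ, 0 < Z lam := fun lam => integral_exp_pos (hint lam)
  -- derivative of Z
  have hZderiv : ∀ lam : ℝ, HasDerivAt Z (Z' lam) lam := by
    intro lam
    have := hasDerivAt_integral_of_dominated_loc_of_deriv_le (μ := μ)
      (F := fun l x => Real.exp (l * f x)) (F' := fun l x => f x * Real.exp (l * f x))
      (x₀ := lam) (bound := fun _ => B * Real.exp ((|lam| + 1) * B)) (Metric.ball_mem_nhds lam one_pos)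
      (Filter.Eventually.of_forall fun l => ((hf.const_mul l).exp.aestronglyMeasurable))
      (hint lam)
      ((hf.mul (hf.const_mul lam).exp).aestronglyMeasurable)
      ?_ (integrable_const _) ?_
    · exact this.2
    · filter_upwards with x l hl
      rw [Real.norm_eq_abs, abs_mul, abs_of_pos (Real.exp_pos _)]
      have hl' : |l| ≤ |lam| + 1 := by
        have := mem_ball_iff_norm.mp hl
        rw [Real.norm_eq_abs] at this
        calc |l| = |lam + (l - lam)| := by ring_nf
          _ ≤ |lam| + |l - lam| := abs_add_le _ _
          _ ≤ |lam| + 1 := by linarith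
      refine mul_le_mul (hB x) ?_ (Real.exp_pos _).le hB0
      apply Real.exp_le_exp.mpr
      calc l * f x ≤ |l * f x| := le_abs_self _
        _ = |l| * |f x| := abs_mul _ _
        _ ≤ (|lam| + 1) * B := mul_le_mul hl' (hB x) (abs_nonneg _) (by positivity)
    · filter_upwards with x l _
      have h1 : HasDerivAt (fun l : ℝ => l * f x) (f x) l := hasDerivAt_mul_const (f x)
      have := h1.exp
      simpa [mul_comm] using this
  -- log Z
  set g : ℝ → ℝ := fun lam => Real.log (Z lam) with hgdef
  have hgderiv : ∀ lam : ℝ, HasDerivAt g (Z' lam / Z lam) lam :=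
    fun lam => (hZderiv lam).log (hZpos lam).ne'
  have hZ0 : Z 0 = 1 := by simp [hZdef]
  have hg0 : g 0 = 0 := by simp [hgdef, hZ0]
  set m : ℝ := ∫ y, f y ∂μ with hmdef
  have hZ'0 : Z' 0 = m := by simp [hZ'def, hmdef]
  -- ψ
  set ψ : ℝ → ℝ := fun lam => g lam / lam - C * lam with hψdef
  have hψderiv : ∀ lam : ℝ, 0 < lam →
      HasDerivAt ψ ((Z' lam / Z lam * lam - g lam) / lam ^ 2 - C) lam := by
    intro lam hlam
    have h1 : HasDerivAt (fun l : ℝ => g l / l) ((Z' lam / Z lam * lam - g lam * 1) / lam ^ 2) lam :=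
      (hgderiv lam).div (hasDerivAt_id lam) hlam.ne'
    have h2 : HasDerivAt (fun l : ℝ => C * l) C lam := by
      simpa using (hasDerivAt_id lam).const_mul C
    have h3 := h1.sub h2
    simp only [mul_one] at h3
    exact h3
  have hψnonpos : ∀ lam ∈ Set.Ioc (0 : ℝ) 1,
      (Z' lam / Z lam * lam - g lam) / lam ^ 2 - C ≤ 0 := by
    intro lam hlam
    have hl0 := hlam.1
    have hh := h lam ⟨hl0.le, hlam.2⟩
    have hZl := hZpos lam
    have key : Z' lam / Z lam * lam - g lam ≤ C * lam ^ 2 := by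
      have heq : Z' lam / Z lam * lam - g lam = (lam * Z' lam - Z lam * g lam) / Z lam := by
        field_simp
      rw [heq, div_le_iff₀ hZl]
      calc lam * Z' lam - Z lam * g lam ≤ C * lam ^ 2 * Z lam := hh
        _ = C * lam ^ 2 * Z lam := rfl
    rw [sub_nonpos, div_le_iff₀ (by positivity : (0:ℝ) < lam ^ 2)]
    linarith
  -- ψ antitone on Ioc 0 1
  have hanti : AntitoneOn ψ (Set.Ioc (0:ℝ) 1) := by
    apply antitoneOn_of_deriv_nonpos (convex_Ioc 0 1)
    · intro lam hlam
      exact (hψderiv lam hlam.1).continuousAt.continuousWithinAt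
    · intro lam hlam
      rw [interior_Ioc] at hlam
      exact (hψderiv lam hlam.1).differentiableAt.differentiableWithinAt
    · intro lam hlam
      rw [interior_Ioc] at hlam
      rw [(hψderiv lam hlam.1).deriv]
      exact hψnonpos lam ⟨hlam.1, hlam.2.le⟩
  -- limit of ψ at 0⁺ is m
  have hlim : Tendsto ψ (nhdsWithin 0 (Set.Ioi 0)) (nhds m) := by
    have hslope : Tendsto (fun l => g l / l) (nhdsWithin 0 (Set.Ioi 0)) (nhds m) := by
      have := (hasDerivAt_iff_tendsto_slope.mp (hgderiv 0))
      rw [hZ'0, hZ0, div_one] at this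
      have h2 : Tendsto (slope g 0) (nhdsWithin 0 (Set.Ioi 0)) (nhds m) :=
        this.mono_left (nhdsWithin_mono 0 (fun x hx => ne_of_gt hx))
      refine h2.congr' ?_
      filter_upwards [self_mem_nhdsWithin] with l hl
      simp [slope_def_field, hg0]
    have hC2 : Tendsto (fun l : ℝ => C * l) (nhdsWithin 0 (Set.Ioi 0)) (nhds 0) := by
      have : Tendsto (fun l : ℝ => C * l) (nhds 0) (nhds (C * 0)) :=
        (continuous_const.mul continuous_id).tendsto 0
      simpa using this.mono_left nhdsWithin_le_nhds
    simpa using hslope.sub hC2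
  -- ψ 1 ≤ m
  have hψ1 : ψ 1 ≤ m := by
    apply ge_of_tendsto hlim
    filter_upwards [Ioo_mem_nhdsGT_of_mem (Set.left_mem_Ico.mpr one_pos)] with l hl
    exact hanti ⟨hl.1, hl.2.le⟩ ⟨one_pos, le_refl 1⟩ hl.2.le
  have hlogZ1 : Real.log (Z 1) ≤ m + C := by
    have : g 1 / 1 - C * 1 ≤ m := hψ1
    simp only [div_one, mul_one] at this
    have : g 1 ≤ m + C := by linarith
    simpa [hgdef] using this
  have hZ1 : Z 1 ≤ Real.exp (m + C) := by
    rw [← Real.exp_log (hZpos 1)]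
    exact Real.exp_le_exp.mpr hlogZ1
  -- conclude
  have heq : (∫ x, Real.exp (f x - m) ∂μ) = Z 1 * Real.exp (-m) := by
    rw [hZdef]
    simp only [one_mul]
    rw [← integral_mul_const]
    congr 1; ext x
    rw [← Real.exp_add]; ring_nf
  calc (∫ x, Real.exp (f x - m) ∂μ) = Z 1 * Real.exp (-m) := heq
    _ ≤ Real.exp (m + C) * Real.exp (-m) := by gcongr
    _ = Real.exp C := by rw [← Real.exp_add]; congr 1; ring
end

section
/- Let μ be a probability measure on X satisfying the log-Sobolev inequality with constant D > 0, and let M > 0 be such that for every i ∈ ℤ the pushforward μ^{(i)} of μ under the spin flip at site i is absolutely continuous with respect to μ with ‖dμ^{(i)}/dμ‖_{L^∞(μ)} ≤ M. Then for every local continuous f : X → ℝ and every λ ∈ [0,1], λ·∫ f·e^{λf} dμ − (∫ e^{λf} dμ)·log(∫ e^{λf} dμ) ≤ (D(M+1)/2)·‖δ(f)‖₂²·λ²·∫ e^{λf} dμ. -/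
open MeasureTheory Real

noncomputable section

lemma continuous_flipAt (i : ℤ) : Continuous (flipAt i) := by
  apply continuous_pi
  intro j
  by_cases h : j = i
  · simp only [flipAt, h, if_true]
    exact Continuous.comp (continuous_of_discreteTopology (f := Bool.not)) (continuous_apply i)
  · simp only [flipAt, h, if_false]
    exact continuous_apply j

lemma measurable_flipAt (i : ℤ) : Measurable (flipAt i) := (continuous_flipAt i).measurable

lemma integrable_cont (μ : Measure Config) [IsFiniteMeasure μ] {F : Config → ℝ}
    (hF : Continuous F) : Integrable F μ :=
  hF.integrable_of_hasCompactSupport (HasCompactSupport.of_compactSpace F)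

lemma exp_half_sub_sq (a b : ℝ) :
    (exp (a/2) - exp (b/2))^2 ≤ (a-b)^2/4 * (exp a + exp b) := by
  have key : ∀ x y : ℝ, y ≤ x → (exp (x/2) - exp (y/2))^2 ≤ (x-y)^2/4 * exp x := by
    intro x y h
    have h1 : 0 ≤ exp (x/2) - exp (y/2) :=
      sub_nonneg.2 (exp_le_exp.2 (by linarith))
    have h2 : exp (x/2) - exp (y/2) ≤ (x-y)/2 * exp (x/2) := by
      have h3 := add_one_le_exp (y/2 - x/2)
      have h4 := mul_le_mul_of_nonneg_left h3 (exp_pos (x/2)).le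
      rw [← exp_add] at h4
      have h5 : x/2 + (y/2 - x/2) = y/2 := by ring
      rw [h5] at h4
      nlinarith
    have h5 : (exp (x/2) - exp (y/2))^2 ≤ ((x-y)/2 * exp (x/2))^2 :=
      pow_le_pow_left₀ h1 h2 2
    have h6 : exp (x/2) * exp (x/2) = exp x := by rw [← exp_add]; ring_nf
    nlinarith
  rcases le_total b a with h | h
  · have := key a b h
    nlinarith [exp_pos b]
  · have := key b a h
    have e : (exp (a/2) - exp (b/2))^2 = (exp (b/2) - exp (a/2))^2 := by ring
    rw [e]
    nlinarith [exp_pos a]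

lemma exists_bound {F : Config → ℝ} (hF : Continuous F) : ∃ B : ℝ, ∀ ω, |F ω| ≤ B := by
  obtain ⟨A, hA⟩ := (isCompact_range hF).bddAbove
  obtain ⟨L, hL⟩ := (isCompact_range hF).bddBelow
  refine ⟨max A (-L), fun ω => abs_le.2 ⟨?_, ?_⟩⟩
  · have h1 : L ≤ F ω := hL (Set.mem_range_self ω)
    have h2 : -L ≤ max A (-L) := le_max_right _ _
    linarith
  · exact (hA (Set.mem_range_self ω)).trans (le_max_left _ _)

lemma zero_mem_oscSet (F : Config → ℝ) (k : ℤ) :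
    (0:ℝ) ∈ {d : ℝ | ∃ ξ η : Config, (∀ j : ℤ, j ≠ k → ξ j = η j) ∧ d = F ξ - F η} :=
  ⟨(fun _ => true), (fun _ => true), fun _ _ => rfl, by ring⟩

lemma bddAbove_oscSet {F : Config → ℝ} (hF : Continuous F) (k : ℤ) :
    BddAbove {d : ℝ | ∃ ξ η : Config, (∀ j : ℤ, j ≠ k → ξ j = η j) ∧ d = F ξ - F η} := by
  obtain ⟨B, hB⟩ := exists_bound hF
  refine ⟨2*B, fun d hd => ?_⟩
  obtain ⟨ξ, η, -, rfl⟩ := hd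
  have h1 := abs_le.1 (hB ξ); have h2 := abs_le.1 (hB η); linarith [h1.2, h2.1]

lemma le_osc {F : Config → ℝ} (hF : Continuous F) {k : ℤ} {ξ η : Config}
    (h : ∀ j : ℤ, j ≠ k → ξ j = η j) : F ξ - F η ≤ osc F k :=
  le_csSup (bddAbove_oscSet hF k) ⟨ξ, η, h, rfl⟩

lemma flipAt_apply_ne {i j : ℤ} (ω : Config) (h : j ≠ i) : flipAt i ω j = ω j := by
  simp [flipAt, h]

lemma abs_sub_flip_le {F : Config → ℝ} (hF : Continuous F) (k : ℤ) (ω : Config) :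
    |F ω - F (flipAt k ω)| ≤ osc F k := by
  refine abs_le.2 ⟨?_, le_osc hF (fun j hj => (flipAt_apply_ne ω hj).symm)⟩
  have := le_osc hF (k := k) (ξ := flipAt k ω) (η := ω) (fun j hj => flipAt_apply_ne ω hj)
  linarith

lemma eq_of_agree_off {F : Config → ℝ} {S : Finset ℤ}
    (hS : ∀ ω η : Config, (∀ i ∈ S, ω i = η i) → F ω = F η) {k : ℤ} (hk : k ∉ S)
    {ξ η : Config} (h : ∀ j : ℤ, j ≠ k → ξ j = η j) : F ξ = F η :=
  hS ξ η (fun i hi => h i (fun hik => hk (hik ▸ hi)))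

lemma osc_eq_zero_of_not_mem {F : Config → ℝ} {S : Finset ℤ}
    (hS : ∀ ω η : Config, (∀ i ∈ S, ω i = η i) → F ω = F η) {k : ℤ} (hk : k ∉ S) :
    osc F k = 0 := by
  have h : {d : ℝ | ∃ ξ η : Config, (∀ j : ℤ, j ≠ k → ξ j = η j) ∧ d = F ξ - F η} = {0} := by
    ext d
    constructor
    · rintro ⟨ξ, η, hag, rfl⟩
      simp [eq_of_agree_off hS hk hag]
    · rintro rfl; exact zero_mem_oscSet F k
  rw [osc, h, csSup_singleton]

lemma flip_eq_of_not_mem {F : Config → ℝ} {S : Finset ℤ}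
    (hS : ∀ ω η : Config, (∀ i ∈ S, ω i = η i) → F ω = F η) {k : ℤ} (hk : k ∉ S)
    (ω : Config) : F (flipAt k ω) = F ω :=
  eq_of_agree_off hS hk (fun j hj => flipAt_apply_ne ω hj)

lemma oscSq_eq_sum {F : Config → ℝ} {S : Finset ℤ}
    (hS : ∀ ω η : Config, (∀ i ∈ S, ω i = η i) → F ω = F η) :
    oscSq F = ∑ k ∈ S, (osc F k) ^ 2 :=
  tsum_eq_sum (fun k hk => by rw [osc_eq_zero_of_not_mem hS hk]; ring)

/-- If `μ` satisfies the log-Sobolev inequality with constant `D > 0`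
and each spin-flip pushforward has density bounded by `M`, then for every local
continuous `f` and every `λ ∈ [0,1]` the Herbst differential inequality holds with
constant `(D(M+1)/2)·‖δ(f)‖₂²`. -/
theorem statement12 (μ : Measure Config) [IsProbabilityMeasure μ]
    (D : ℝ) (hD : 0 < D) (hLSI : SatisfiesLSI μ D)
    (M : ℝ) (hM : 0 < M)
    (hflip : ∀ i : ℤ, μ.map (flipAt i) ≪ μ ∧
      ∀ᵐ ω ∂μ, (μ.map (flipAt i)).rnDeriv μ ω ≤ ENNReal.ofReal M) :
    ∀ f : Config → ℝ, IsLocal f → Continuous f →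
      ∀ lam ∈ Set.Icc (0 : ℝ) 1,
        lam * (∫ ω, f ω * exp (lam * f ω) ∂μ)
          - (∫ ω, exp (lam * f ω) ∂μ) * log (∫ ω, exp (lam * f ω) ∂μ)
        ≤ (D * (M + 1) / 2) * oscSq f * lam ^ 2 * ∫ ω, exp (lam * f ω) ∂μ := by
  intro f hfl hfc lam hlam
  obtain ⟨S, hS⟩ := hfl
  set I : ℝ := ∫ ω, exp (lam * f ω) ∂μ with hI
  have hIc : Continuous fun ω => exp (lam * f ω) := continuous_exp.comp (continuous_const.mul hfc)
  have hIpos : 0 ≤ I := integral_nonneg (fun ω => (exp_pos _).le)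
  -- the test function g
  set g : Config → ℝ := fun ω => exp ((lam * f ω) / 2) with hg
  have hgS : ∀ ω η : Config, (∀ i ∈ S, ω i = η i) → g ω = g η := by
    intro ω η h; simp only [hg, hS ω η h]
  have hgc : Continuous g := continuous_exp.comp ((continuous_const.mul hfc).div_const 2)
  have hlsi := hLSI g ⟨S, hgS⟩ hgc
  -- rewrite g² = exp(lam f)
  have hg2 : (fun ω => g ω ^ 2) = fun ω => exp (lam * f ω) := by
    funext ω; rw [sq, ← exp_add]; ring_nf
  rw [hg2] at hlsi
  -- the LHS is the entropy
  have hL : entropy μ (fun ω => exp (lam * f ω))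
      = lam * (∫ ω, f ω * exp (lam * f ω) ∂μ) - I * log I := by
    unfold entropy
    have h1 : (fun ω => exp (lam * f ω) * log (exp (lam * f ω)))
        = fun ω => lam * (f ω * exp (lam * f ω)) := by
      funext ω; rw [log_exp]; ring
    rw [h1, integral_const_mul]
  rw [hL] at hlsi
  refine hlsi.trans ?_
  -- rewrite tsum as finite sum
  have hts : (fun ω => ∑' i : ℤ, (g ω - g (flipAt i ω)) ^ 2)
      = fun ω => ∑ i ∈ S, (g ω - g (flipAt i ω)) ^ 2 := by
    funext ω
    exact tsum_eq_sum (fun i hi => by rw [flip_eq_of_not_mem hgS hi]; ring)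
  rw [hts]
  -- integrability of each term
  have hTc : ∀ i : ℤ, Continuous fun ω => (g ω - g (flipAt i ω)) ^ 2 := fun i =>
    ((hgc.sub (hgc.comp (continuous_flipAt i))).pow 2)
  rw [integral_finset_sum _ (fun i _ => integrable_cont μ (hTc i))]
  -- bound each summand
  have key : ∀ i ∈ S, (∫ ω, (g ω - g (flipAt i ω)) ^ 2 ∂μ)
      ≤ (osc f i) ^ 2 * (lam ^ 2 / 4 * ((M + 1) * I)) := by
    intro i _
    have hflipc : Continuous fun ω => exp (lam * f (flipAt i ω)) :=
      hIc.comp (continuous_flipAt i)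
    -- pointwise bound
    have hpt : ∀ ω, (g ω - g (flipAt i ω)) ^ 2
        ≤ lam ^ 2 * (osc f i) ^ 2 / 4 * (exp (lam * f ω) + exp (lam * f (flipAt i ω))) := by
      intro ω
      have h1 := exp_half_sub_sq (lam * f ω) (lam * f (flipAt i ω))
      have habs := abs_le.1 (abs_sub_flip_le hfc i ω)
      have hd2 : (f ω - f (flipAt i ω)) ^ 2 ≤ (osc f i) ^ 2 :=
        sq_le_sq' (by linarith [habs.1]) habs.2
      have h2 : (lam * f ω - lam * f (flipAt i ω)) ^ 2 ≤ lam ^ 2 * (osc f i) ^ 2 := by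
        have : (lam * f ω - lam * f (flipAt i ω)) ^ 2 = lam ^ 2 * (f ω - f (flipAt i ω)) ^ 2 := by
          ring
        rw [this]
        exact mul_le_mul_of_nonneg_left hd2 (sq_nonneg lam)
      have hexp : 0 ≤ exp (lam * f ω) + exp (lam * f (flipAt i ω)) := by positivity
      calc (g ω - g (flipAt i ω)) ^ 2
          ≤ (lam * f ω - lam * f (flipAt i ω)) ^ 2 / 4
              * (exp (lam * f ω) + exp (lam * f (flipAt i ω))) := h1
        _ ≤ lam ^ 2 * (osc f i) ^ 2 / 4
              * (exp (lam * f ω) + exp (lam * f (flipAt i ω))) := by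
            apply mul_le_mul_of_nonneg_right _ hexp
            linarith
    -- integrate the pointwise bound
    have hint1 : (∫ ω, (g ω - g (flipAt i ω)) ^ 2 ∂μ)
        ≤ ∫ ω, lam ^ 2 * (osc f i) ^ 2 / 4
            * (exp (lam * f ω) + exp (lam * f (flipAt i ω))) ∂μ := by
      apply integral_mono_of_nonneg
      · exact Filter.Eventually.of_forall (fun ω => sq_nonneg _)
      · exact (integrable_cont μ (hIc.add hflipc)).const_mul _
      · exact Filter.Eventually.of_forall hpt
    rw [integral_const_mul, integral_add (integrable_cont μ hIc) (integrable_cont μ hflipc)]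
      at hint1
    -- bound the flipped integral via the density
    have hJ : (∫ ω, exp (lam * f (flipAt i ω)) ∂μ) ≤ M * I := by
      have hmap : (∫ ω, exp (lam * f (flipAt i ω)) ∂μ)
          = ∫ ω, exp (lam * f ω) ∂(μ.map (flipAt i)) :=
        (integral_map (measurable_flipAt i).aemeasurable hIc.aestronglyMeasurable).symm
      have : IsProbabilityMeasure (μ.map (flipAt i)) :=
        Measure.isProbabilityMeasure_map (measurable_flipAt i).aemeasurable
      haveI := Measure.haveLebesgueDecomposition_of_finiteMeasure (μ := μ.map (flipAt i)) (ν := μ)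
      rw [hmap, ← integral_rnDeriv_smul (hflip i).1]
      have hle : (fun ω => ((μ.map (flipAt i)).rnDeriv μ ω).toReal • exp (lam * f ω))
          ≤ᵐ[μ] fun ω => M * exp (lam * f ω) := by
        filter_upwards [(hflip i).2] with ω hω
        have h1 : ((μ.map (flipAt i)).rnDeriv μ ω).toReal ≤ M := by
          have := ENNReal.toReal_mono ENNReal.ofReal_ne_top hω
          rwa [ENNReal.toReal_ofReal hM.le] at this
        simpa [smul_eq_mul] using mul_le_mul_of_nonneg_right h1 (exp_pos (lam * f ω)).le
      have hm := integral_mono_of_nonneg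
        (Filter.Eventually.of_forall (fun ω => by positivity))
        ((integrable_cont μ hIc).const_mul M) hle
      rwa [integral_const_mul] at hm
    have hosc : 0 ≤ lam ^ 2 * (osc f i) ^ 2 / 4 := by positivity
    calc (∫ ω, (g ω - g (flipAt i ω)) ^ 2 ∂μ)
        ≤ lam ^ 2 * (osc f i) ^ 2 / 4 * (I + ∫ ω, exp (lam * f (flipAt i ω)) ∂μ) := hint1
      _ ≤ lam ^ 2 * (osc f i) ^ 2 / 4 * (I + M * I) := by
          apply mul_le_mul_of_nonneg_left _ hosc
          linarith
      _ = (osc f i) ^ 2 * (lam ^ 2 / 4 * ((M + 1) * I)) := by ring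
  have hsum := Finset.sum_le_sum key
  have h2D : (0:ℝ) ≤ 2 * D := by linarith
  calc 2 * D * ∑ i ∈ S, ∫ ω, (g ω - g (flipAt i ω)) ^ 2 ∂μ
      ≤ 2 * D * ∑ i ∈ S, (osc f i) ^ 2 * (lam ^ 2 / 4 * ((M + 1) * I)) :=
        mul_le_mul_of_nonneg_left hsum h2D
    _ = (D * (M + 1) / 2) * oscSq f * lam ^ 2 * I := by
        rw [← Finset.sum_mul, oscSq_eq_sum hS]; ring

end
end

section
/- For every real number v ≥ 0, ∑_{m=1}^∞ ((2^m + 2)/m!)·m·v^m·Γ(m/2) ≤ (6v² + 8v)·e^{v²}, where Γ denotes Euler's Gamma function. -/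
open Real

lemma gamma_half (k : ℕ) :
    Real.Gamma ((k : ℝ) + 1/2)
      = ((2*k).factorial : ℝ) * Real.sqrt π / (4^k * (k.factorial : ℝ)) := by
  induction k with
  | zero =>
    rw [show ((0:ℕ):ℝ) + 1/2 = 1/2 by norm_num, Real.Gamma_one_half_eq]
    simp
  | succ k ih =>
    have hne : ((k:ℝ) + 1/2) ≠ 0 := by positivity
    have h1 : ((k+1 : ℕ) : ℝ) + 1/2 = ((k:ℝ) + 1/2) + 1 := by push_cast; ring
    have h2 : ((2*(k+1)).factorial : ℝ) = (2*(k:ℝ)+2) * ((2*(k:ℝ)+1) * ((2*k).factorial : ℝ)) := by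
      have : 2*(k+1) = ((2*k)+1)+1 := by ring
      rw [this, Nat.factorial_succ, Nat.factorial_succ]; push_cast; ring
    have h3 : (((k+1:ℕ)).factorial : ℝ) = ((k:ℝ)+1) * (k.factorial : ℝ) := by
      rw [Nat.factorial_succ]; push_cast; ring
    rw [h1, Real.Gamma_add_one hne, ih, h2, h3]
    have hk : (k.factorial : ℝ) ≠ 0 := by positivity
    have h2k : ((2*k).factorial : ℝ) ≠ 0 := by positivity
    have h4 : (4:ℝ)^(k+1) = 4 * 4^k := by ring
    have hk1 : ((k:ℝ)+1) ≠ 0 := by positivity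
    rw [h4]
    field_simp
    ring

lemma fact_ineq (k : ℕ) : (4^(k+1) + 2) * (k.factorial)^2 ≤ 6 * ((2*k+1).factorial) := by
  induction k with
  | zero => simp [Nat.factorial]
  | succ k ih =>
    have h1 : (2*(k+1)+1).factorial = (2*k+3) * ((2*k+2) * (2*k+1).factorial) := by
      have : 2*(k+1)+1 = ((2*k+1)+1)+1 := by ring
      rw [this, Nat.factorial_succ, Nat.factorial_succ]
    have h2 : (k+1).factorial = (k+1) * k.factorial := Nat.factorial_succ k
    rw [h1, h2]
    have key : 4*(k+1)^2 ≤ (2*k+3)*(2*k+2) := by nlinarith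
    calc (4^(k+1+1)+2) * ((k+1)*k.factorial)^2
        = (k+1)^2 * ((4*4^(k+1)+2) * k.factorial^2) := by ring
      _ ≤ (k+1)^2 * (4*((4^(k+1)+2) * k.factorial^2)) := by
          apply Nat.mul_le_mul_left
          calc (4*4^(k+1)+2) * k.factorial^2 ≤ (4*(4^(k+1)+2)) * k.factorial^2 :=
                Nat.mul_le_mul_right _ (by omega)
            _ = 4*((4^(k+1)+2) * k.factorial^2) := by ring
      _ ≤ (k+1)^2 * (4*(6*(2*k+1).factorial)) := by
          apply Nat.mul_le_mul_left; exact Nat.mul_le_mul_left _ ih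
      _ = 4*(k+1)^2 * (6*(2*k+1).factorial) := by ring
      _ ≤ ((2*k+3)*(2*k+2)) * (6*(2*k+1).factorial) := Nat.mul_le_mul_right _ key
      _ = 6 * ((2*k+3) * ((2*k+2) * (2*k+1).factorial)) := by ring

lemma exp_tsum (x : ℝ) : ∑' n : ℕ, x ^ n / (n.factorial : ℝ) = Real.exp x := by
  rw [Real.exp_eq_exp_ℝ, NormedSpace.exp_eq_tsum_div]

/-- For every `v ≥ 0`,
`∑_{m=1}^∞ ((2^m + 2)/m!)·m·v^m·Γ(m/2) ≤ (6v² + 8v)·e^{v²}`. -/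
theorem statement14 (v : ℝ) (hv : 0 ≤ v) :
    (∑' m : ℕ, ((2 ^ (m + 1) + 2 : ℝ) / (Nat.factorial (m + 1) : ℝ)
        * ((m : ℝ) + 1) * v ^ (m + 1) * Real.Gamma (((m : ℝ) + 1) / 2)))
      ≤ (6 * v ^ 2 + 8 * v) * Real.exp (v ^ 2) := by
  set G : ℕ → ℝ := fun m => (2 ^ (m + 1) + 2 : ℝ) / (Nat.factorial (m + 1) : ℝ)
        * ((m : ℝ) + 1) * v ^ (m + 1) * Real.Gamma (((m : ℝ) + 1) / 2) with hGdef
  set A : ℕ → ℝ := fun k => (4 * Real.sqrt π * v) * ((v^2)^k / (k.factorial : ℝ)) with hAdef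
  set B : ℕ → ℝ := fun k => (6 * v^2) * ((v^2)^k / (k.factorial : ℝ)) with hBdef
  have hsum : Summable (fun k : ℕ => (v^2)^k / (k.factorial : ℝ)) :=
    Real.summable_pow_div_factorial (v^2)
  have hA : Summable A := hsum.mul_left _
  have hB : Summable B := hsum.mul_left _
  have hGnn : ∀ m, 0 ≤ G m := by
    intro m
    have hΓ : 0 < Real.Gamma (((m : ℝ) + 1) / 2) := Real.Gamma_pos_of_pos (by positivity)
    simp only [hGdef]
    positivity
  -- even-index (in the shifted sum) bound: G (2k) ≤ A k
  have hGe : ∀ k : ℕ, G (2*k) ≤ A k := by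
    intro k
    have hcast : (((2*k : ℕ) : ℝ) + 1) / 2 = (k : ℝ) + 1/2 := by push_cast; ring
    have hfact : ((2*k+1).factorial : ℝ) = (2*(k:ℝ)+1) * ((2*k).factorial : ℝ) := by
      rw [Nat.factorial_succ]; push_cast; ring
    have hpow : v^(2*k+1) = v * (v^2)^k := by
      rw [pow_succ, pow_mul]; ring
    have h4 : (2:ℝ)^(2*k+1) = 2 * 4^k := by
      rw [pow_succ, pow_mul]; norm_num; ring
    have hGeq : G (2*k) = ((2*4^k+2) / 4^k) * (Real.sqrt π * (v * (v^2)^k) / (k.factorial : ℝ)) := by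
      simp only [hGdef]
      rw [hcast, gamma_half k, hfact, hpow, h4]
      have h2k : ((2*k).factorial : ℝ) ≠ 0 := by positivity
      have hk : (k.factorial : ℝ) ≠ 0 := by positivity
      have h4k : (4:ℝ)^k ≠ 0 := by positivity
      have hcast2 : ((2*k : ℕ) : ℝ) + 1 = 2*(k:ℝ)+1 := by push_cast; ring
      rw [hcast2]
      have h2k1 : (2*(k:ℝ)+1) ≠ 0 := by positivity
      field_simp
    rw [hGeq]
    have hcoef : ((2*(4:ℝ)^k+2) / 4^k) ≤ 4 := by
      rw [div_le_iff₀ (by positivity)]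
      have : (1:ℝ) ≤ 4^k := one_le_pow₀ (by norm_num)
      nlinarith
    have hrest : (0:ℝ) ≤ Real.sqrt π * (v * (v^2)^k) / (k.factorial : ℝ) := by positivity
    calc ((2*4^k+2) / 4^k) * (Real.sqrt π * (v * (v^2)^k) / (k.factorial : ℝ))
        ≤ 4 * (Real.sqrt π * (v * (v^2)^k) / (k.factorial : ℝ)) :=
          mul_le_mul_of_nonneg_right hcoef hrest
      _ = (4 * Real.sqrt π * v) * ((v^2)^k / (k.factorial : ℝ)) := by ring
  -- odd-index bound: G (2k+1) ≤ B k
  have hGo : ∀ k : ℕ, G (2*k+1) ≤ B k := by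
    intro k
    have hΓ2 : Real.Gamma ((((2*k+1 : ℕ) : ℝ) + 1) / 2) = (k.factorial : ℝ) := by
      rw [show (((2*k+1 : ℕ) : ℝ) + 1) / 2 = ((k:ℕ) : ℝ) + 1 by push_cast; ring,
        Real.Gamma_nat_eq_factorial]
    have hfact : ((2*k+1+1).factorial : ℝ) = (2*(k:ℝ)+2) * ((2*k+1).factorial : ℝ) := by
      rw [Nat.factorial_succ]; push_cast; ring
    have hpow : v^(2*k+1+1) = v^2 * (v^2)^k := by
      rw [show 2*k+1+1 = 2*k+2 by ring, pow_add, pow_mul]; ring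
    have h4 : (2:ℝ)^(2*k+1+1) = 4^(k+1) := by
      rw [show 2*k+1+1 = 2*(k+1) by ring, pow_mul]; norm_num
    have hkey : ((4:ℝ)^(k+1)+2) * (k.factorial : ℝ)^2 ≤ 6 * ((2*k+1).factorial : ℝ) := by
      exact_mod_cast fact_ineq k
    have hGeq : G (2*k+1)
        = ((4^(k+1)+2) * (k.factorial:ℝ) / ((2*k+1).factorial : ℝ)) * (v^2 * (v^2)^k) := by
      simp only [hGdef]
      rw [hΓ2, hfact, hpow, h4]
      have h2k : ((2*k+1).factorial : ℝ) ≠ 0 := by positivity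
      have hk : (k.factorial : ℝ) ≠ 0 := by positivity
      have hcast2 : ((2*k+1 : ℕ) : ℝ) + 1 = 2*(k:ℝ)+2 := by push_cast; ring
      rw [hcast2]
      have h2k2 : (2*(k:ℝ)+2) ≠ 0 := by positivity
      field_simp
    rw [hGeq]
    have hk0 : (0:ℝ) < (k.factorial : ℝ) := by positivity
    have h2k0 : (0:ℝ) < ((2*k+1).factorial : ℝ) := by positivity
    have hcoef : ((4:ℝ)^(k+1)+2) * (k.factorial:ℝ) / ((2*k+1).factorial : ℝ)
        ≤ 6 / (k.factorial : ℝ) := by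
      rw [div_le_div_iff₀ h2k0 hk0]
      nlinarith
    have hrest : (0:ℝ) ≤ v^2 * (v^2)^k := by positivity
    calc ((4^(k+1)+2) * (k.factorial:ℝ) / ((2*k+1).factorial : ℝ)) * (v^2 * (v^2)^k)
        ≤ (6 / (k.factorial : ℝ)) * (v^2 * (v^2)^k) := mul_le_mul_of_nonneg_right hcoef hrest
      _ = (6 * v^2) * ((v^2)^k / (k.factorial : ℝ)) := by ring
  have hGe' : Summable (fun k => G (2*k)) :=
    Summable.of_nonneg_of_le (fun k => hGnn _) hGe hA
  have hGo' : Summable (fun k => G (2*k+1)) :=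
    Summable.of_nonneg_of_le (fun k => hGnn _) hGo hB
  have hsplit := tsum_even_add_odd hGe' hGo'
  have htA : ∑' k, A k = 4 * Real.sqrt π * v * Real.exp (v^2) := by
    rw [hAdef, tsum_mul_left, exp_tsum]
  have htB : ∑' k, B k = 6 * v^2 * Real.exp (v^2) := by
    rw [hBdef, tsum_mul_left, exp_tsum]
  have hsqrt : Real.sqrt π ≤ 2 := by
    have h4 : Real.sqrt 4 = 2 := by
      rw [show (4:ℝ) = 2^2 by norm_num, Real.sqrt_sq (by norm_num)]
    calc Real.sqrt π ≤ Real.sqrt 4 := Real.sqrt_le_sqrt Real.pi_le_four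
      _ = 2 := h4
  calc ∑' m, G m = (∑' k, G (2*k)) + ∑' k, G (2*k+1) := hsplit.symm
    _ ≤ (∑' k, A k) + ∑' k, B k :=
        add_le_add (Summable.tsum_le_tsum hGe hGe' hA) (Summable.tsum_le_tsum hGo hGo' hB)
    _ = 4 * Real.sqrt π * v * Real.exp (v^2) + 6 * v^2 * Real.exp (v^2) := by rw [htA, htB]
    _ ≤ (6 * v ^ 2 + 8 * v) * Real.exp (v ^ 2) := by
        have he : 0 < Real.exp (v^2) := Real.exp_pos _
        nlinarith [mul_nonneg hv he.le]
end
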